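/- arXiv:2110.01138 — 4 statements merged into one kernel-verified Lean document; each statement's English description precedes it below -/
import Mathlib

section
/- Let K be a reflective full subcategory of Top₀ closed under homeomorphisms such that K ⊄ Top₁, let Z be a sober space and let X be a subspace of Z. Define cl_k(X) = ⋂{A : X ⊆ A ⊆ Z and the subspace A belongs to K}, regarded as a subspace of Z. Then the inclusion map e_X : X → cl_k(X) is a K-reflection for X. -/
open TopologicalSpace

/-- The b-topology associated with a topological space `(X, t)`: the topology with base
`{U ∩ cl({x}) : x ∈ U, U open}`. -/
def bTop (X : Type) (t : TopologicalSpace X) : TopologicalSpace X :=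
  TopologicalSpace.generateFrom
    {s | ∃ (U : Set X) (x : X), @IsOpen X t U ∧ x ∈ U ∧ s = U ∩ @closure X t {x}}

/-- The specialization order of `(X, t)`: `x ≤ y` iff `x ∈ cl({y})`. -/
def specLE {X : Type} (t : TopologicalSpace X) (x y : X) : Prop :=
  x ∈ @closure X t {y}

/-- The subspace topology on a subset. -/
def subTop {X : Type} (t : TopologicalSpace X) (A : Set X) : TopologicalSpace A :=
  TopologicalSpace.induced Subtype.val t

/-- A class of topological spaces, viewed as the object class of a full subcategory of Top. -/
abbrev SpaceClass : Type 1 := (X : Type) → TopologicalSpace X → Prop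

/-- All members of `K` are T₀ (i.e. `K` is a subcategory of `Top₀`). -/
def AllT0 (K : SpaceClass) : Prop := ∀ X t, K X t → @T0Space X t

/-- `K` is closed under homeomorphisms. -/
def ClosedUnderHomeo (K : SpaceClass) : Prop :=
  ∀ (X Y : Type) (tX : TopologicalSpace X) (tY : TopologicalSpace Y),
    K X tX → Nonempty (@Homeomorph X Y tX tY) → K Y tY

/-- `K ⊄ Top₁`: `K` contains a space that is not T₁. -/
def NotSubT1 (K : SpaceClass) : Prop := ∃ X t, K X t ∧ ¬ @T1Space X t

/-- `μ : X → Xk` is a K-reflection for `X`: `Xk ∈ K`, `μ` is continuous and every continuous map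
from `X` to a member of `K` factors uniquely (continuously) through `μ`. -/
def IsReflection (K : SpaceClass) {X Xk : Type} (tX : TopologicalSpace X)
    (tk : TopologicalSpace Xk) (μ : X → Xk) : Prop :=
  K Xk tk ∧ @Continuous X Xk tX tk μ ∧
    ∀ (Z : Type) (tZ : TopologicalSpace Z), K Z tZ →
      ∀ f : X → Z, @Continuous X Z tX tZ f →
        ∃! g : Xk → Z, @Continuous Xk Z tk tZ g ∧ g ∘ μ = f

/-- `K` is reflective in `Top₀`: every T₀ space admits a K-reflection. -/
def IsReflective (K : SpaceClass) : Prop :=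
  ∀ (X : Type) (tX : TopologicalSpace X), @T0Space X tX →
    ∃ (Xk : Type) (tk : TopologicalSpace Xk) (μ : X → Xk), IsReflection K tX tk μ

/-- `K` is b-closed-hereditary. -/
def BClosedHereditary (K : SpaceClass) : Prop :=
  ∀ (X : Type) (tX : TopologicalSpace X) (A : Set X),
    K X tX → @IsClosed X (bTop X tX) A → K A (subTop tX A)

/-- `K` is productive. -/
def Productive (K : SpaceClass) : Prop :=
  ∀ (I : Type) (X : I → Type) (t : ∀ i, TopologicalSpace (X i)),
    (∀ i, K (X i) (t i)) → K (∀ i, X i) (@Pi.topologicalSpace I X t)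

/-- `K` has equalizers. -/
def HasEqualizers (K : SpaceClass) : Prop :=
  ∀ (X Y : Type) (tX : TopologicalSpace X) (tY : TopologicalSpace Y),
    K X tX → K Y tY → ∀ f g : X → Y, @Continuous X Y tX tY f → @Continuous X Y tX tY g →
      K {x | f x = g x} (subTop tX {x | f x = g x})

/-- `(X, t)` is sober: T₀ and every irreducible closed set is the closure of a point. -/
def Sober (X : Type) (t : TopologicalSpace X) : Prop := @T0Space X t ∧ @QuasiSober X t

open Set
instance instT0Prop : T0Space Prop := by
  constructor
  intro p q h
  have := inseparable_iff_forall_isOpen.1 h {r : Prop | r}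
    (by simpa [show {r : Prop | r} = {True} from by ext r; simp [iff_true]] using
      isOpen_singleton_true)
  exact propext this

section K
variable {K : SpaceClass} (hT0 : AllT0 K) (hHomeo : ClosedUnderHomeo K)
  (hRefl : IsReflective K) (hNotT1 : NotSubT1 K)

include hHomeo hRefl in
/-- If `X` is T₀ and for any reflection of `X` there is a continuous retraction, then `X ∈ K`. -/
theorem lemA {X : Type} {tX : TopologicalSpace X} (h0 : @T0Space X tX)
    (H : ∀ (Xk : Type) (tk : TopologicalSpace Xk) (μ : X → Xk), IsReflection K tX tk μ →
      ∃ q : Xk → X, @Continuous Xk X tk tX q ∧ q ∘ μ = id) : K X tX := by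
  obtain ⟨Xk, tk, μ, hR⟩ := hRefl X tX h0
  obtain ⟨q, hqc, hq⟩ := H Xk tk μ hR
  obtain ⟨hK, hμc, huniv⟩ := hR
  obtain ⟨g, hg, hgu⟩ := huniv Xk tk hK μ hμc
  have h1 : μ ∘ q = id := by
    have e1 : μ ∘ q = g := hgu (μ ∘ q) ⟨hμc.comp hqc, by
      show μ ∘ (q ∘ μ) = μ; rw [hq]; rfl⟩
    have e2 : (id : Xk → Xk) = g := hgu id ⟨continuous_id, rfl⟩
    rw [e1, ← e2]
  exact hHomeo Xk X tk tX hK ⟨⟨⟨q, μ, congrFun h1, congrFun hq⟩, hqc, hμc⟩⟩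

include hT0 hHomeo hRefl hNotT1 in
/-- The Sierpiński space belongs to `K`. -/
theorem sierK : K Prop sierpinskiSpace := by
  obtain ⟨X0, t0, hKX, hnT1⟩ := hNotT1
  letI := t0
  haveI : T0Space X0 := hT0 _ _ hKX
  -- find x ≠ y with x ∈ closure {y}
  have : ∃ y : X0, ¬ IsClosed ({y} : Set X0) := by
    by_contra hc
    push_neg at hc
    exact hnT1 ⟨fun y => hc y⟩
  obtain ⟨y, hy⟩ := this
  have hne : closure ({y} : Set X0) ≠ {y} := fun h => hy (h ▸ isClosed_closure)
  have : ∃ x, x ∈ closure ({y} : Set X0) ∧ x ≠ y := by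
    by_contra hc
    push_neg at hc
    exact hne (Subset.antisymm (fun x hx => hc x hx) subset_closure)
  obtain ⟨x, hxc, hxy⟩ := this
  have hxy' : ∀ U : Set X0, IsOpen U → x ∈ U → y ∈ U := by
    intro U hU hxU
    rcases mem_closure_iff.1 hxc U hU hxU with ⟨z, hz1, hz2⟩
    simp at hz2; rwa [← hz2]
  -- get U open with y ∈ U, x ∉ U
  have : ∃ U : Set X0, IsOpen U ∧ y ∈ U ∧ x ∉ U := by
    have hni : ¬ Inseparable x y := fun h => hxy h.eq
    rw [inseparable_iff_forall_isOpen] at hni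
    push_neg at hni
    obtain ⟨U, hU, hiff⟩ := hni
    rcases hiff with h | h
    · exact absurd (hxy' U hU h.1) h.2
    · exact ⟨U, hU, h.2, h.1⟩
  obtain ⟨U, hU, hyU, hxU⟩ := this
  classical
  set s : Prop → X0 := fun p => if p then y else x with hs
  have hsc : Continuous s := by
    rw [continuous_def]
    intro V hV
    by_cases hyV : y ∈ V
    · by_cases hxV : x ∈ V
      · have : s ⁻¹' V = univ := by
          ext p; simp only [mem_preimage, mem_univ, iff_true, hs]
          by_cases hp : p <;> simp [hp, hyV, hxV]
        rw [this]; exact isOpen_univ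
      · have : s ⁻¹' V = {True} := by
          ext p; simp only [mem_preimage, hs, mem_singleton_iff]
          by_cases hp : p <;> simp [hp, hyV, hxV, iff_true]
        rw [this]; exact isOpen_singleton_true
    · by_cases hxV : x ∈ V
      · exact absurd (hxy' V hV hxV) hyV
      · have : s ⁻¹' V = ∅ := by
          ext p; simp only [mem_preimage, mem_empty_iff_false, iff_false, hs]
          by_cases hp : p <;> simp [hp, hyV, hxV]
        rw [this]; exact isOpen_empty
  have hrc : Continuous (fun z : X0 => z ∈ U) := continuous_Prop.2 hU
  have hrs : (fun z : X0 => z ∈ U) ∘ s = id := by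
    funext p
    simp only [Function.comp_apply, hs, id]
    by_cases hp : p <;> simp [hp, hyU, hxU]
  apply lemA hHomeo hRefl inferInstance
  intro Pk tk μ hR
  obtain ⟨s', hs'c, hs'⟩ := (hR.2.2 X0 t0 hKX s hsc).exists
  exact ⟨(fun z : X0 => z ∈ U) ∘ s', hrc.comp hs'c, by
    rw [Function.comp_assoc, hs', hrs]⟩


include hT0 hHomeo hRefl in
/-- `K` is closed under products. -/
theorem piK (I : Type) (X : I → Type) (t : ∀ i, TopologicalSpace (X i))
    (h : ∀ i, K (X i) (t i)) : K (∀ i, X i) (@Pi.topologicalSpace I X t) := by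
  letI := fun i => t i
  haveI : ∀ i, T0Space (X i) := fun i => hT0 _ _ (h i)
  apply lemA hHomeo hRefl inferInstance
  intro Pk tk μ hR
  have hev : ∀ i, ∃ e : Pk → X i, @Continuous Pk (X i) tk (t i) e ∧
      e ∘ μ = fun a => a i := fun i =>
    (hR.2.2 (X i) (t i) (h i) (fun a => a i) (continuous_apply i)).exists
  choose e hec he using hev
  exact ⟨fun k i => e i k, continuous_pi hec, by funext a; funext i; exact congrFun (he i) a⟩

include hT0 hHomeo hRefl in
/-- `K` is closed under binary products. -/
theorem prodK {X Y : Type} {tX : TopologicalSpace X} {tY : TopologicalSpace Y}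
    (hX : K X tX) (hY : K Y tY) : K (X × Y) (@instTopologicalSpaceProd X Y tX tY) := by
  letI := tX; letI := tY
  haveI : T0Space X := hT0 _ _ hX
  haveI : T0Space Y := hT0 _ _ hY
  apply lemA hHomeo hRefl inferInstance
  intro Pk tk μ hR
  obtain ⟨e1, he1c, he1⟩ := (hR.2.2 X tX hX Prod.fst continuous_fst).exists
  obtain ⟨e2, he2c, he2⟩ := (hR.2.2 Y tY hY Prod.snd continuous_snd).exists
  exact ⟨fun k => (e1 k, e2 k), he1c.prodMk he2c, by
    funext a; exact Prod.ext (congrFun he1 a) (congrFun he2 a)⟩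

include hT0 hHomeo hRefl in
/-- `K` is closed under equalizers. -/
theorem eqK {X Y : Type} {tX : TopologicalSpace X} {tY : TopologicalSpace Y}
    (hX : K X tX) (hY : K Y tY) (f g : X → Y) (hf : @Continuous X Y tX tY f)
    (hg : @Continuous X Y tX tY g) : K {x | f x = g x} (subTop tX {x | f x = g x}) := by
  letI := tX; letI := tY
  haveI : T0Space X := hT0 _ _ hX
  set E : Set X := {x | f x = g x} with hE
  show K E (subTop tX E)
  have hsub : subTop tX E = @instTopologicalSpaceSubtype X (· ∈ E) tX := rfl
  rw [hsub]
  haveI : T0Space E := Subtype.t0Space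
  apply lemA hHomeo hRefl inferInstance
  intro Ek tk μ hR
  have hvc : Continuous (Subtype.val : E → X) := continuous_subtype_val
  obtain ⟨v, ⟨hvc', hv⟩, hvu⟩ := hR.2.2 X tX hX Subtype.val hvc
  have hfv : f ∘ v = g ∘ v := by
    obtain ⟨w, hw, hwu⟩ := hR.2.2 Y tY hY (f ∘ Subtype.val) (hf.comp hvc)
    have h1 : f ∘ v = w := hwu (f ∘ v) ⟨hf.comp hvc', by rw [Function.comp_assoc, hv]⟩
    have h2 : g ∘ v = w := hwu (g ∘ v) ⟨hg.comp hvc', by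
      rw [Function.comp_assoc, hv]
      funext x
      exact (x.2 : f x.1 = g x.1).symm⟩
    rw [h1, h2]
  refine ⟨fun k => ⟨v k, congrFun hfv k⟩, ?_, ?_⟩
  · exact hvc'.subtype_mk _
  · funext x
    exact Subtype.ext (congrFun hv x)


end K

section SoberAux
variable {Z : Type} (tZ : TopologicalSpace Z)

/-- The set of open sets of `(Z, tZ)`, as a type. -/
def Opens' (Z : Type) (tZ : TopologicalSpace Z) : Type := {U : Set Z // @IsOpen Z tZ U}

/-- The canonical map into the Sierpiński power. -/
def etaMap : Z → (Opens' Z tZ → Prop) := fun z U => z ∈ U.1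

/-- Index type for the frame-point equations. -/
def idxT (Z : Type) (tZ : TopologicalSpace Z) : Type :=
  Unit ⊕ (Opens' Z tZ × Opens' Z tZ) ⊕ Set (Opens' Z tZ)

/-- Left-hand sides of the frame-point equations. -/
def Fmap : (Opens' Z tZ → Prop) → idxT Z tZ → Prop := fun ξ i =>
  Sum.rec (fun _ => True)
    (Sum.rec (fun p => ξ p.1 ∧ ξ p.2) (fun 𝒮 => ∃ U ∈ 𝒮, ξ U)) i

/-- Right-hand sides of the frame-point equations. -/
def Gmap : (Opens' Z tZ → Prop) → idxT Z tZ → Prop := fun ξ i =>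
  Sum.rec (fun _ => ξ ⟨Set.univ, isOpen_univ⟩)
    (Sum.rec (fun p => ξ ⟨p.1.1 ∩ p.2.1, p.1.2.inter p.2.2⟩)
      (fun 𝒮 => ξ ⟨⋃ U ∈ 𝒮, U.1, isOpen_biUnion fun U _ => U.2⟩)) i

theorem open_eval (W : Opens' Z tZ) : IsOpen {ξ : Opens' Z tZ → Prop | ξ W} :=
  continuous_Prop.1 (continuous_apply W)

theorem Fmap_cont : Continuous (Fmap tZ) := by
  apply continuous_pi; rintro (⟨⟩ | ⟨U, V⟩ | 𝒮)
  · exact continuous_const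
  · refine continuous_Prop.2 ?_
    have : {ξ : Opens' Z tZ → Prop | ξ U ∧ ξ V} = {ξ | ξ U} ∩ {ξ | ξ V} := rfl
    rw [show {ξ : Opens' Z tZ → Prop | Fmap tZ ξ (Sum.inr (Sum.inl (U, V)))} =
      {ξ | ξ U} ∩ {ξ | ξ V} from rfl]
    exact (open_eval tZ U).inter (open_eval tZ V)
  · refine continuous_Prop.2 ?_
    rw [show {ξ : Opens' Z tZ → Prop | Fmap tZ ξ (Sum.inr (Sum.inr 𝒮))} =
      ⋃ U ∈ 𝒮, {ξ | ξ U} from by ext ξ; simp [Fmap]]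
    exact isOpen_biUnion fun U _ => open_eval tZ U

theorem Gmap_cont : Continuous (Gmap tZ) := by
  apply continuous_pi; rintro (⟨⟩ | ⟨U, V⟩ | 𝒮) <;> exact continuous_apply _

theorem range_eta (h0 : @T0Space Z tZ) (hqs : @QuasiSober Z tZ) :
    Set.range (etaMap tZ) = {ξ | Fmap tZ ξ = Gmap tZ ξ} := by
  letI := tZ
  haveI := h0; haveI := hqs
  apply Set.Subset.antisymm
  · rintro _ ⟨z, rfl⟩
    show Fmap tZ (etaMap tZ z) = Gmap tZ (etaMap tZ z)
    funext i
    rcases i with ⟨⟩ | ⟨U, V⟩ | 𝒮 <;> apply propext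
    · simp [Fmap, Gmap, etaMap]
    · simp [Fmap, Gmap, etaMap]
    · simp [Fmap, Gmap, etaMap]
  · intro ξ hξ
    have huniv : ξ ⟨Set.univ, isOpen_univ⟩ :=
      of_eq_true (congrFun hξ (Sum.inl ())).symm
    have hinter : ∀ U V : Opens' Z tZ, (ξ U ∧ ξ V) ↔ ξ ⟨U.1 ∩ V.1, U.2.inter V.2⟩ :=
      fun U V => iff_of_eq (congrFun hξ (Sum.inr (Sum.inl (U, V))))
    have hunion : ∀ 𝒮 : Set (Opens' Z tZ),
        (∃ U ∈ 𝒮, ξ U) ↔ ξ ⟨⋃ U ∈ 𝒮, U.1, isOpen_biUnion fun U _ => U.2⟩ :=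
      fun 𝒮 => iff_of_eq (congrFun hξ (Sum.inr (Sum.inr 𝒮)))
    have hmono : ∀ U V : Opens' Z tZ, U.1 ⊆ V.1 → ξ U → ξ V := by
      intro U V hUV hU
      have h1 := hunion {U, V}
      have hset : (⟨⋃ W ∈ ({U, V} : Set (Opens' Z tZ)), W.1,
          isOpen_biUnion fun W _ => W.2⟩ : Opens' Z tZ) = V := by
        apply Subtype.ext
        simp only []
        rw [Set.biUnion_pair]
        exact Set.union_eq_self_of_subset_left hUV
      rw [hset] at h1
      exact h1.1 ⟨U, by simp, hU⟩
    set V0 : Opens' Z tZ := ⟨⋃ U ∈ {U : Opens' Z tZ | ¬ ξ U}, U.1,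
      isOpen_biUnion fun U _ => U.2⟩ with hV0def
    have hV0 : ¬ ξ V0 := by
      intro h
      obtain ⟨U, hU, hξU⟩ := (hunion {U : Opens' Z tZ | ¬ ξ U}).2 h
      exact hU hξU
    set C : Set Z := V0.1ᶜ with hCdef
    have hkey : ∀ U : Opens' Z tZ, ξ U ↔ (U.1 ∩ C).Nonempty := by
      intro U
      constructor
      · intro hU
        by_contra hne
        have hsub : U.1 ⊆ V0.1 := by
          intro z hz
          by_contra hz2
          exact hne ⟨z, hz, hz2⟩
        exact hV0 (hmono U V0 hsub hU)
      · rintro ⟨z, hzU, hzC⟩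
        by_contra hU
        exact hzC (Set.mem_biUnion (show U ∈ {U : Opens' Z tZ | ¬ ξ U} from hU) hzU)
    have hCne : C.Nonempty := by
      rcases (hkey ⟨Set.univ, isOpen_univ⟩).1 huniv with ⟨z, _, hz⟩
      exact ⟨z, hz⟩
    have hCirr : IsIrreducible C := by
      refine ⟨hCne, ?_⟩
      intro u v hu hv hCu hCv
      have h1 : ξ ⟨u, hu⟩ := (hkey _).2 (by rwa [Set.inter_comm] at hCu)
      have h2 : ξ ⟨v, hv⟩ := (hkey _).2 (by rwa [Set.inter_comm] at hCv)
      have h3 : ξ ⟨u ∩ v, hu.inter hv⟩ := (hinter _ _).1 ⟨h1, h2⟩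
      rcases (hkey _).1 h3 with ⟨z, hz1, hz2⟩
      exact ⟨z, hz2, hz1⟩
    obtain ⟨z, hz⟩ := QuasiSober.sober hCirr V0.2.isClosed_compl
    refine ⟨z, ?_⟩
    have hzC : z ∈ C := by rw [← hz]; exact subset_closure rfl
    funext U
    apply propext
    constructor
    · intro hzU
      exact (hkey U).2 ⟨z, hzU, hzC⟩
    · intro hU
      rcases (hkey U).1 hU with ⟨w, hw1, hw2⟩
      have hwz : w ∈ closure ({z} : Set Z) := by rw [hz]; exact hw2
      rcases mem_closure_iff.1 hwz U.1 U.2 hw1 with ⟨y, hy1, hy2⟩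
      rcases hy2 with rfl
      exact hy1

end SoberAux

section K2
variable {K : SpaceClass} (hT0 : AllT0 K) (hHomeo : ClosedUnderHomeo K)
  (hRefl : IsReflective K) (hNotT1 : NotSubT1 K)

include hT0 hHomeo hRefl hNotT1 in
/-- Every sober space belongs to `K`. -/
theorem soberK {Z : Type} {tZ : TopologicalSpace Z} (h0 : @T0Space Z tZ)
    (hqs : @QuasiSober Z tZ) : K Z tZ := by
  letI := tZ
  haveI := h0
  have hsK : K Prop sierpinskiSpace := sierK hT0 hHomeo hRefl hNotT1
  have hPK : K (Opens' Z tZ → Prop) Pi.topologicalSpace :=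
    piK hT0 hHomeo hRefl _ _ _ fun _ => hsK
  have hIK : K (idxT Z tZ → Prop) Pi.topologicalSpace :=
    piK hT0 hHomeo hRefl _ _ _ fun _ => hsK
  have hKE := eqK hT0 hHomeo hRefl hPK hIK (Fmap tZ) (Gmap tZ) (Fmap_cont tZ) (Gmap_cont tZ)
  rw [← range_eta tZ h0 hqs] at hKE
  -- now transport along the homeomorphism `range (etaMap tZ) ≃ₜ Z`
  have hηc : Continuous (etaMap tZ) := by
    apply continuous_pi
    intro U
    exact continuous_Prop.2 U.2
  have hηinj : Function.Injective (etaMap tZ) := by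
    intro z1 z2 h12
    apply Inseparable.eq
    rw [inseparable_iff_forall_isOpen]
    intro s hs
    exact iff_of_eq (congrFun h12 ⟨s, hs⟩)
  classical
  set gfun : Set.range (etaMap tZ) → Z := fun ξ => Classical.choose ξ.2 with hgdef
  have hgfun : ∀ ξ : Set.range (etaMap tZ), etaMap tZ (gfun ξ) = ξ.1 :=
    fun ξ => Classical.choose_spec ξ.2
  have hgc : @Continuous _ _ (subTop Pi.topologicalSpace (Set.range (etaMap tZ))) tZ gfun := by
    rw [continuous_def]
    intro U hU
    have : gfun ⁻¹' U = Subtype.val ⁻¹' {ξ : Opens' Z tZ → Prop | ξ ⟨U, hU⟩} := by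
      ext ξ
      show gfun ξ ∈ U ↔ ξ.1 ⟨U, hU⟩
      rw [← hgfun ξ]
      rfl
    rw [this]
    exact (open_eval tZ ⟨U, hU⟩).preimage continuous_subtype_val
  refine hHomeo _ Z _ tZ hKE ⟨⟨⟨gfun, fun z => ⟨etaMap tZ z, Set.mem_range_self z⟩, ?_, ?_⟩, hgc, ?_⟩⟩
  · intro ξ
    exact Subtype.ext (hgfun ξ)
  · intro z
    exact hηinj (hgfun ⟨etaMap tZ z, Set.mem_range_self z⟩)
  · exact hηc.subtype_mk _

end K2

/-- let `K` be a reflective full subcategory of Top₀ closed under homeomorphisms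
containing a non-T₁ space, `Z` sober and `S ⊆ Z`. Then with
`cl_k(S) = ⋂ {A | S ⊆ A ⊆ Z, subspace A ∈ K}`, the inclusion `S → cl_k(S)` is a K-reflection
for the subspace `S`. -/
theorem statement13 (K : SpaceClass) (hT0 : AllT0 K) (hHomeo : ClosedUnderHomeo K)
    (hRefl : IsReflective K) (hNotT1 : NotSubT1 K)
    (Z : Type) (tZ : TopologicalSpace Z) (hZ : Sober Z tZ) (S : Set Z) :
    ∃ h : S ⊆ ⋂₀ {A : Set Z | S ⊆ A ∧ K A (subTop tZ A)},
      IsReflection K (subTop tZ S)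
        (subTop tZ (⋂₀ {A : Set Z | S ⊆ A ∧ K A (subTop tZ A)}))
        (Set.inclusion h) := by
  classical
  letI := tZ
  have hZ' : @T0Space Z tZ ∧ @QuasiSober Z tZ := hZ
  haveI : T0Space Z := hZ'.1
  set 𝒜 : Set (Set Z) := {A : Set Z | S ⊆ A ∧ K A (subTop tZ A)} with h𝒜
  set cl : Set Z := ⋂₀ 𝒜 with hcl
  have hZK : K Z tZ := soberK hT0 hHomeo hRefl hNotT1 hZ'.1 hZ'.2
  have hunivK : K ↥(Set.univ : Set Z) (subTop tZ Set.univ) :=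
    hHomeo Z _ tZ _ hZK ⟨(Homeomorph.Set.univ Z).symm⟩
  have huniv𝒜 : Set.univ ∈ 𝒜 := ⟨Set.subset_univ S, hunivK⟩
  have h : S ⊆ cl := fun s hs A hA => hA.1 hs
  set i₀ : ↥𝒜 := ⟨Set.univ, huniv𝒜⟩ with hi₀
  -- Step 1: cl ∈ K, via the equalizer of two maps on the product of all members of 𝒜
  have hclK : K ↥cl (subTop tZ cl) := by
    have hPK : K (∀ A : ↥𝒜, ↥(A.1)) (@Pi.topologicalSpace ↥𝒜 _ fun A => subTop tZ A.1) :=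
      piK hT0 hHomeo hRefl _ _ _ fun A => A.2.2
    have hZIK : K (↥𝒜 → Z) Pi.topologicalSpace :=
      piK hT0 hHomeo hRefl _ _ _ fun _ => hZK
    set f : (∀ A : ↥𝒜, ↥(A.1)) → (↥𝒜 → Z) := fun a i => (a i).1 with hfdef
    set g : (∀ A : ↥𝒜, ↥(A.1)) → (↥𝒜 → Z) := fun a _ => (a i₀).1 with hgdef
    have hfc : Continuous f :=
      continuous_pi fun i => continuous_subtype_val.comp (continuous_apply i)
    have hgc : Continuous g :=
      continuous_pi fun _ => continuous_subtype_val.comp (continuous_apply i₀)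
    have hKE := eqK hT0 hHomeo hRefl hPK hZIK f g hfc hgc
    refine hHomeo _ _ _ (subTop tZ cl) hKE ⟨⟨⟨?_, ?_, ?_, ?_⟩, ?_, ?_⟩⟩
    · exact fun e => ⟨(e.1 i₀).1, by
        rw [hcl, Set.mem_sInter]
        intro A hA
        have he : f e.1 = g e.1 := e.2
        have h2 : ((e.1 ⟨A, hA⟩ : ↥A) : Z) = ((e.1 i₀ : ↥(i₀.1)) : Z) := congrFun he ⟨A, hA⟩
        exact h2 ▸ (e.1 ⟨A, hA⟩).2⟩
    · exact fun c => ⟨fun i => ⟨c.1, (Set.mem_sInter.1 c.2) i.1 i.2⟩, by funext i; rfl⟩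
    · intro e
      apply Subtype.ext
      funext i
      exact Subtype.ext (congrFun e.2 i).symm
    · intro c
      exact Subtype.ext rfl
    · exact (continuous_subtype_val.comp
        ((continuous_apply i₀).comp continuous_subtype_val)).subtype_mk _
    · exact (continuous_pi fun i => continuous_subtype_val.subtype_mk _).subtype_mk _
  refine ⟨h, hclK, continuous_inclusion h, ?_⟩
  -- universal property
  intro W tW hKW f hf
  letI := tW
  haveI : T0Space W := hT0 _ _ hKW
  have hUex : ∀ V : Opens' W tW, ∃ U : Set Z, IsOpen U ∧
      (Subtype.val : ↥S → Z) ⁻¹' U = f ⁻¹' V.1 := by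
    intro V
    obtain ⟨U, hU1, hU2⟩ := isOpen_induced_iff.1 (V.2.preimage hf)
    exact ⟨U, hU1, hU2⟩
  choose U hUopen hUpre using hUex
  set F₁ : ↥cl × W → (Opens' W tW → Prop) := fun x V => (x.1 : Z) ∈ U V with hF₁def
  set G₁ : ↥cl × W → (Opens' W tW → Prop) := fun x V => x.2 ∈ V.1 with hG₁def
  have hF₁c : Continuous F₁ := continuous_pi fun V =>
    continuous_Prop.2 ((hUopen V).preimage (continuous_subtype_val.comp continuous_fst))
  have hG₁c : Continuous G₁ := continuous_pi fun V =>
    continuous_Prop.2 (V.2.preimage continuous_snd)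
  have hKprod : K (↥cl × W) (@instTopologicalSpaceProd _ _ (subTop tZ cl) tW) :=
    prodK hT0 hHomeo hRefl hclK hKW
  have hKpow : K (Opens' W tW → Prop) Pi.topologicalSpace :=
    piK hT0 hHomeo hRefl _ _ _ fun _ => sierK hT0 hHomeo hRefl hNotT1
  have hKD := eqK hT0 hHomeo hRefl hKprod hKpow F₁ G₁ hF₁c hG₁c
  set D : Set (↥cl × W) := {x | F₁ x = G₁ x} with hDdef
  have hD : ∀ x : ↥cl × W, x ∈ D ↔ ∀ V : Opens' W tW, ((x.1 : Z) ∈ U V ↔ x.2 ∈ V.1) := by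
    intro x
    constructor
    · intro hx V; exact iff_of_eq (congrFun hx V)
    · intro hx; funext V; exact propext (hx V)
  have huw : ∀ (z : ↥cl) (w₁ w₂ : W), (z, w₁) ∈ D → (z, w₂) ∈ D → w₁ = w₂ := by
    intro z w₁ w₂ h1 h2
    apply Inseparable.eq
    rw [inseparable_iff_forall_isOpen]
    intro s hs
    exact ((hD _).1 h1 ⟨s, hs⟩).symm.trans ((hD _).1 h2 ⟨s, hs⟩)
  have hSD : ∀ s : ↥S, (Set.inclusion h s, f s) ∈ D := by
    intro s
    rw [hD]
    intro V
    exact Set.ext_iff.1 (hUpre V) s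
  set A' : Set Z := {z : Z | ∃ (hz : z ∈ cl) (w : W), ((⟨z, hz⟩ : ↥cl), w) ∈ D} with hA'def
  have hSA' : S ⊆ A' := fun s hs => ⟨h hs, f ⟨s, hs⟩, hSD ⟨s, hs⟩⟩
  have hKA' : K ↥A' (subTop tZ A') := by
    refine hHomeo _ _ _ (subTop tZ A') hKD ⟨⟨⟨?_, ?_, ?_, ?_⟩, ?_, ?_⟩⟩
    · exact fun d => ⟨(d.1.1 : Z), d.1.1.2, d.1.2, d.2⟩
    · exact fun a => ⟨(⟨⟨a.1, a.2.choose⟩, a.2.choose_spec.choose⟩ : ↥cl × W),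
        a.2.choose_spec.choose_spec⟩
    · intro d
      apply Subtype.ext
      apply Prod.ext
      · exact Subtype.ext rfl
      · exact huw d.1.1 _ _
          ((⟨d.1.1.2, d.1.2, d.2⟩ : ((d.1.1 : Z) ∈ A')).choose_spec.choose_spec) d.2
    · intro a
      exact Subtype.ext rfl
    · exact (continuous_subtype_val.comp
        (continuous_fst.comp continuous_subtype_val)).subtype_mk _
    · refine Continuous.subtype_mk (Continuous.prodMk
        (continuous_subtype_val.subtype_mk _) ?_) _
      rw [continuous_def]
      intro V hV
      have hopen' : IsOpen (Subtype.val ⁻¹' (U ⟨V, hV⟩) : Set ↥A') :=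
        (hUopen ⟨V, hV⟩).preimage continuous_subtype_val
      convert hopen' using 1
      ext a
      exact Iff.symm ((hD _).1 a.2.choose_spec.choose_spec ⟨V, hV⟩)
  have hclA' : cl ⊆ A' := Set.sInter_subset_of_mem ⟨hSA', hKA'⟩
  have hex : ∀ p : ↥cl, ∃ w : W, (p, w) ∈ D := by
    intro p
    obtain ⟨hz, w, hw⟩ := hclA' p.2
    exact ⟨w, hw⟩
  set g : ↥cl → W := fun p => (hex p).choose with hgdef
  have hg : ∀ p : ↥cl, (p, g p) ∈ D := fun p => (hex p).choose_spec
  have hgc : Continuous g := by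
    rw [continuous_def]
    intro V hV
    have hopen' : IsOpen (Subtype.val ⁻¹' (U ⟨V, hV⟩) : Set ↥cl) :=
      (hUopen ⟨V, hV⟩).preimage continuous_subtype_val
    convert hopen' using 1
    ext p
    exact Iff.symm ((hD _).1 (hg p) ⟨V, hV⟩)
  have hgf : g ∘ Set.inclusion h = f := by
    funext s
    exact huw (Set.inclusion h s) _ _ (hg _) (hSD s)
  refine ⟨g, ⟨hgc, hgf⟩, ?_⟩
  rintro g' ⟨hg'c, hg'e⟩
  have hKE' := eqK hT0 hHomeo hRefl hclK hKW g' g hg'c hgc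
  set A'' : Set Z := {z : Z | ∃ hz : z ∈ cl, g' ⟨z, hz⟩ = g ⟨z, hz⟩} with hA''def
  have hSA'' : S ⊆ A'' := by
    intro s hs
    exact ⟨h hs, (congrFun hg'e ⟨s, hs⟩).trans (congrFun hgf ⟨s, hs⟩).symm⟩
  have hKA'' : K ↥A'' (subTop tZ A'') := by
    refine hHomeo _ _ _ (subTop tZ A'') hKE' ⟨⟨⟨?_, ?_, ?_, ?_⟩, ?_, ?_⟩⟩
    · exact fun e => ⟨e.1.1, e.1.2, e.2⟩
    · exact fun a => ⟨⟨a.1, a.2.choose⟩, a.2.choose_spec⟩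
    · intro e
      exact Subtype.ext (Subtype.ext rfl)
    · intro a
      exact Subtype.ext rfl
    · exact (continuous_subtype_val.comp continuous_subtype_val).subtype_mk _
    · exact (continuous_subtype_val.subtype_mk _).subtype_mk _
  have hclA'' : cl ⊆ A'' := Set.sInter_subset_of_mem ⟨hSA'', hKA''⟩
  funext p
  obtain ⟨hz, hp⟩ := hclA'' p.2
  exact hp
end

section
/- Let K be a full subcategory of Top₀ closed under homeomorphisms such that K ⊄ Top₁. Then K is reflective in Top₀ if and only if K satisfies the Keimel–Lawson conditions: (K1) K contains all sober spaces; (K3) if {X_i : i ∈ I} is a family of subsets of a sober space Z such that each subspace X_i belongs to K, then the subspace ⋂_{i∈I} X_i belongs to K; and (K4) if f : X → Y is a continuous map between sober spaces and Y₁ ⊆ Y is a subset whose subspace belongs to K, then the subspace f⁻¹(Y₁) belongs to K. -/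
open TopologicalSpace

section Sobr
open Set Function
variable (X : Type) [tX : TopologicalSpace X]

/-- Points of the sobrification: irreducible closed subsets. -/
def SobPt : Type := {C : Set X // IsIrreducible C ∧ IsClosed C}

variable {X}

def diam (U : Set X) : Set (SobPt X) := {C | (C.1 ∩ U).Nonempty}

instance sobTop : TopologicalSpace (SobPt X) :=
  generateFrom {s | ∃ U, IsOpen U ∧ s = diam U}

lemma diam_inter {U V : Set X} (hU : IsOpen U) (hV : IsOpen V) :
    diam (U ∩ V) = diam U ∩ diam V := by
  ext C
  constructor
  · rintro ⟨x, hxC, hxU, hxV⟩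
    exact ⟨⟨x, hxC, hxU⟩, ⟨x, hxC, hxV⟩⟩
  · rintro ⟨h1, h2⟩
    have := C.2.1.2 U V hU hV ⟨h1.choose, h1.choose_spec⟩ ⟨h2.choose, h2.choose_spec⟩
    exact this

lemma diam_iUnion {ι : Sort*} {U : ι → Set X} : diam (⋃ i, U i) = ⋃ i, diam (U i) := by
  ext C
  simp only [diam, mem_setOf_eq, mem_iUnion, inter_iUnion, Set.nonempty_iUnion]

lemma isOpen_sob_iff {W : Set (SobPt X)} : IsOpen W ↔ ∃ U, IsOpen U ∧ W = diam U := by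
  constructor
  · intro h
    induction h with
    | basic s hs => exact hs
    | univ =>
        refine ⟨univ, isOpen_univ, ?_⟩
        ext C; simp only [diam, mem_setOf_eq, inter_univ, mem_univ, true_iff]
        exact C.2.1.1
    | inter s t _ _ ihs iht =>
        obtain ⟨U, hU, rfl⟩ := ihs; obtain ⟨V, hV, rfl⟩ := iht
        exact ⟨U ∩ V, hU.inter hV, (diam_inter hU hV).symm⟩
    | sUnion S _ ih =>
        choose u hu₁ hu₂ using ih
        refine ⟨⋃ s : S, u s.1 s.2, isOpen_iUnion fun s => hu₁ s.1 s.2, ?_⟩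
        rw [diam_iUnion]
        ext C
        simp only [sUnion_eq_iUnion, mem_iUnion]
        exact ⟨fun ⟨s, hs⟩ => ⟨s, (hu₂ s.1 s.2) ▸ hs⟩, fun ⟨s, hs⟩ => ⟨s, (hu₂ s.1 s.2) ▸ hs⟩⟩
  · rintro ⟨U, hU, rfl⟩
    exact isOpen_generateFrom_of_mem ⟨U, hU, rfl⟩

def etaSob (x : X) : SobPt X :=
  ⟨closure {x}, isIrreducible_singleton.closure, isClosed_closure⟩

lemma mem_diam_eta {U : Set X} (hU : IsOpen U) {x : X} : etaSob x ∈ diam U ↔ x ∈ U := by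
  show (closure {x} ∩ U).Nonempty ↔ x ∈ U
  rw [closure_inter_open_nonempty_iff hU]
  simp [Set.singleton_inter_nonempty]

lemma continuous_etaSob : Continuous (etaSob (X := X)) := by
  rw [continuous_generateFrom_iff]
  rintro s ⟨U, hU, rfl⟩
  have : etaSob ⁻¹' diam U = U := by ext x; exact mem_diam_eta hU
  rw [this]; exact hU

lemma sobPt_t0 : T0Space (SobPt X) := by
  refine ⟨fun {C D} h => ?_⟩
  rw [inseparable_iff_forall_isOpen] at h
  refine Subtype.ext (Set.Subset.antisymm ?_ ?_)
  · intro x hx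
    by_contra hxD
    have h1 : C ∈ diam D.1ᶜ := ⟨x, hx, hxD⟩
    have h2 : D ∈ diam D.1ᶜ := (h _ (isOpen_sob_iff.mpr ⟨D.1ᶜ, D.2.2.isOpen_compl, rfl⟩)).mp h1
    obtain ⟨y, hy, hy'⟩ := h2; exact hy' hy
  · intro x hx
    by_contra hxC
    have h1 : D ∈ diam C.1ᶜ := ⟨x, hx, hxC⟩
    have h2 : C ∈ diam C.1ᶜ := (h _ (isOpen_sob_iff.mpr ⟨C.1ᶜ, C.2.2.isOpen_compl, rfl⟩)).mpr h1
    obtain ⟨y, hy, hy'⟩ := h2; exact hy' hy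

lemma sobPt_quasiSober : QuasiSober (SobPt X) := by
  refine ⟨fun {𝒞} h𝒞irr h𝒞cl => ?_⟩
  obtain ⟨U, hU, hUeq⟩ : ∃ U, IsOpen U ∧ 𝒞ᶜ = diam U := isOpen_sob_iff.mp h𝒞cl.isOpen_compl
  have h𝒞eq : 𝒞 = (diam U)ᶜ := by rw [← hUeq, compl_compl]
  set A : Set X := ⋃ C ∈ 𝒞, (C : SobPt X).1 with hA
  have hsubA : ∀ C ∈ 𝒞, (C : SobPt X).1 ⊆ A := fun C hC => subset_biUnion_of_mem hC
  have hAne : A.Nonempty := by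
    obtain ⟨C, hC⟩ := h𝒞irr.1
    obtain ⟨x, hx⟩ := C.2.1.1
    exact ⟨x, hsubA C hC hx⟩
  have hstar : IsIrreducible (closure A) := by
    refine ⟨hAne.closure, ?_⟩
    intro V W hV hW h1 h2
    rw [closure_inter_open_nonempty_iff hV] at h1
    rw [closure_inter_open_nonempty_iff hW] at h2
    obtain ⟨v, hvA, hvV⟩ := h1
    obtain ⟨w, hwA, hwW⟩ := h2
    simp only [hA, mem_iUnion] at hvA hwA
    obtain ⟨C₁, hC₁, hvC₁⟩ := hvA
    obtain ⟨C₂, hC₂, hwC₂⟩ := hwA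
    have hmeet := h𝒞irr.2 (diam V) (diam W)
      (isOpen_sob_iff.mpr ⟨V, hV, rfl⟩) (isOpen_sob_iff.mpr ⟨W, hW, rfl⟩)
      ⟨C₁, hC₁, v, hvC₁, hvV⟩ ⟨C₂, hC₂, w, hwC₂, hwW⟩
    obtain ⟨C₃, hC₃, hC₃V, hC₃W⟩ := hmeet
    obtain ⟨z, hz⟩ := C₃.2.1.2 V W hV hW hC₃V hC₃W
    exact ⟨z, subset_closure (hsubA C₃ hC₃ hz.1), hz.2⟩
  set p : SobPt X := ⟨closure A, hstar, isClosed_closure⟩ with hp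
  have hpmem : p ∈ 𝒞 := by
    rw [h𝒞eq]
    intro hcon
    obtain ⟨z, hzA, hzU⟩ := hcon
    obtain ⟨y, hyA, hyU⟩ : (A ∩ U).Nonempty :=
      (closure_inter_open_nonempty_iff hU).mp ⟨z, hzA, hzU⟩
    simp only [hA, mem_iUnion] at hyA
    obtain ⟨C₁, hC₁, hyC₁⟩ := hyA
    have : C₁ ∈ diam U := ⟨y, hyC₁, hyU⟩
    rw [h𝒞eq] at hC₁
    exact hC₁ this
  refine ⟨p, ?_⟩
  show closure {p} = 𝒞
  refine Set.Subset.antisymm (closure_minimal (Set.singleton_subset_iff.mpr hpmem) h𝒞cl) ?_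
  intro C hC
  rw [mem_closure_iff]
  intro o ho hCo
  obtain ⟨V, hV, rfl⟩ := isOpen_sob_iff.mp ho
  obtain ⟨z, hzC, hzV⟩ := hCo
  refine ⟨p, ?_, rfl⟩
  exact ⟨z, subset_closure (hsubA C hC hzC), hzV⟩

lemma sobPt_sober : T0Space (SobPt X) ∧ QuasiSober (SobPt X) := ⟨sobPt_t0, sobPt_quasiSober⟩

variable {Z : Type} [tZ : TopologicalSpace Z]

def sobMap (f : X → Z) (hf : Continuous f) (C : SobPt X) : SobPt Z :=
  ⟨closure (f '' C.1), (C.2.1.image f hf.continuousOn).closure, isClosed_closure⟩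

lemma continuous_sobMap (f : X → Z) (hf : Continuous f) : Continuous (sobMap f hf) := by
  rw [continuous_generateFrom_iff]
  rintro s ⟨V, hV, rfl⟩
  have : sobMap f hf ⁻¹' diam V = diam (f ⁻¹' V) := by
    ext C
    show (closure (f '' C.1) ∩ V).Nonempty ↔ (C.1 ∩ f ⁻¹' V).Nonempty
    rw [closure_inter_open_nonempty_iff hV]
    constructor
    · rintro ⟨z, ⟨x, hx, rfl⟩, hzV⟩; exact ⟨x, hx, hzV⟩
    · rintro ⟨x, hx, hxV⟩; exact ⟨f x, ⟨x, hx, rfl⟩, hxV⟩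
  rw [this]
  exact isOpen_sob_iff.mpr ⟨f ⁻¹' V, hV.preimage hf, rfl⟩

lemma sobMap_eta (f : X → Z) (hf : Continuous f) (x : X) :
    sobMap f hf (etaSob x) = etaSob (f x) := by
  refine Subtype.ext ?_
  show closure (f '' closure {x}) = closure {f x}
  rw [closure_image_closure hf, Set.image_singleton]

lemma etaSob_injective [T0Space X] : Function.Injective (etaSob (X := X)) := by
  intro x y h
  have hc : closure ({x} : Set X) = closure {y} := congrArg Subtype.val h
  have h1 : x ∈ closure ({y} : Set X) := hc ▸ subset_closure rfl
  have h2 : y ∈ closure ({x} : Set X) := hc.symm ▸ subset_closure rfl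
  exact (((specializes_iff_mem_closure.mpr h1).antisymm
    (specializes_iff_mem_closure.mpr h2)).eq).symm

noncomputable def etaHomeo [T0Space X] : X ≃ₜ Set.range (etaSob (X := X)) := by
  refine Equiv.toHomeomorphOfContinuousOpen (Equiv.ofInjective _ etaSob_injective) ?_ ?_
  · exact continuous_etaSob.subtype_mk _
  · intro U hU
    have : (Equiv.ofInjective _ (etaSob_injective (X := X))) '' U
        = Subtype.val ⁻¹' diam U := by
      ext q
      constructor
      · rintro ⟨x, hxU, rfl⟩
        exact (mem_diam_eta hU).mpr hxU
      · intro hq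
        obtain ⟨x, hx⟩ := q.2
        refine ⟨x, ?_, ?_⟩
        · have : etaSob x ∈ diam U := by rw [hx]; exact hq
          exact (mem_diam_eta hU).mp this
        · exact Subtype.ext hx
    rw [this]
    exact (isOpen_sob_iff.mpr ⟨U, hU, rfl⟩).preimage continuous_subtype_val

end Sobr

section BTopology
open TopologicalSpace Set

lemma bTop_basis {X : Type} (t : TopologicalSpace X) :
    @IsTopologicalBasis X (bTop X t)
      {s | ∃ (U : Set X) (x : X), @IsOpen X t U ∧ x ∈ U ∧ s = U ∩ @closure X t {x}} := by
  letI := t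
  have h1 : ∀ s1 ∈ {s | ∃ (U : Set X) (x : X), IsOpen U ∧ x ∈ U ∧ s = U ∩ closure {x}},
      ∀ s2 ∈ {s | ∃ (U : Set X) (x : X), IsOpen U ∧ x ∈ U ∧ s = U ∩ closure {x}},
      ∀ z ∈ s1 ∩ s2, ∃ s3 ∈ {s | ∃ (U : Set X) (x : X), IsOpen U ∧ x ∈ U ∧ s = U ∩ closure {x}},
        z ∈ s3 ∧ s3 ⊆ s1 ∩ s2 := by
    rintro s1 ⟨U, x, hU, hxU, rfl⟩ s2 ⟨V, y, hV, hyV, rfl⟩ z ⟨⟨hzU, hzx⟩, ⟨hzV, hzy⟩⟩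
    refine ⟨(U ∩ V) ∩ closure {z}, ⟨U ∩ V, z, hU.inter hV, ⟨hzU, hzV⟩, rfl⟩,
      ⟨⟨hzU, hzV⟩, subset_closure rfl⟩, ?_⟩
    rintro w ⟨⟨hwU, hwV⟩, hwz⟩
    have hx : closure ({z} : Set X) ⊆ closure {x} :=
      closure_minimal (Set.singleton_subset_iff.mpr hzx) isClosed_closure
    have hy : closure ({z} : Set X) ⊆ closure {y} :=
      closure_minimal (Set.singleton_subset_iff.mpr hzy) isClosed_closure
    exact ⟨⟨hwU, hx hwz⟩, ⟨hwV, hy hwz⟩⟩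
  have h2 : ⋃₀ {s | ∃ (U : Set X) (x : X), IsOpen U ∧ x ∈ U ∧ s = U ∩ closure {x}}
      = Set.univ := by
    refine Set.eq_univ_of_forall fun z => ?_
    exact ⟨Set.univ ∩ closure {z}, ⟨Set.univ, z, isOpen_univ, trivial, rfl⟩,
      ⟨trivial, subset_closure rfl⟩⟩
  exact @TopologicalSpace.IsTopologicalBasis.mk X (bTop X t) _ h1 h2 rfl

/-- A b-closed subspace of a sober space is sober. -/
lemma sober_of_bClosed {Z : Type} (tZ : TopologicalSpace Z) (hs : Sober Z tZ)
    (A : Set Z) (hA : @IsClosed Z (bTop Z tZ) A) : Sober A (subTop tZ A) := by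
  letI := tZ
  haveI hT0 : T0Space Z := hs.1
  haveI hQS : QuasiSober Z := hs.2
  constructor
  · exact (Subtype.t0Space : T0Space A)
  · refine ⟨fun {C} hCirr hCcl => ?_⟩
    set D := closure (Subtype.val '' C) with hD
    have hDirr : IsIrreducible D :=
      (hCirr.image _ continuous_subtype_val.continuousOn).closure
    obtain ⟨z, hz⟩ := hQS.sober hDirr isClosed_closure
    have hzA : z ∈ A := by
      by_contra hzA
      have hopen : @IsOpen Z (bTop Z tZ) Aᶜ := hA.isOpen_compl
      obtain ⟨s, ⟨U, x, hU, hxU, rfl⟩, ⟨hzU, hzx⟩, hsub⟩ :=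
        ((@TopologicalSpace.IsTopologicalBasis.isOpen_iff Z (bTop Z tZ) Aᶜ _
          (bTop_basis tZ)).mp hopen) z hzA
      have hzD : z ∈ D := by rw [← hz]; exact subset_closure rfl
      obtain ⟨c, hcU, hcC⟩ : (U ∩ Subtype.val '' C).Nonempty := by
        rw [mem_closure_iff] at hzD
        exact hzD U hU hzU
      have hcD : c ∈ closure ({z} : Set Z) := by rw [hz]; exact subset_closure hcC
      have hcx : c ∈ closure ({x} : Set Z) :=
        closure_minimal (Set.singleton_subset_iff.mpr hzx) isClosed_closure hcD
      obtain ⟨c', _, rfl⟩ := hcC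
      exact hsub ⟨hcU, hcx⟩ c'.2
    refine ⟨⟨z, hzA⟩, ?_⟩
    show closure {(⟨z, hzA⟩ : A)} = C
    ext a
    rw [closure_subtype]
    simp only [Set.image_singleton]
    constructor
    · intro ha
      have : (a : Z) ∈ D := by rw [← hz]; exact ha
      have : a ∈ closure C := closure_subtype.mpr this
      exact hCcl.closure_subset this
    · intro ha
      rw [hz]
      exact subset_closure ⟨a, ha, rfl⟩

end BTopology

section Forward
open TopologicalSpace Set

/-- If a reflection admits a continuous section, then `X` itself lies in `K`. -/
lemma K_of_section (K : SpaceClass) (hHomeo : ClosedUnderHomeo K)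
    {X Xk : Type} {tX : TopologicalSpace X} {tk : TopologicalSpace Xk} {μ : X → Xk}
    (hR : IsReflection K tX tk μ) (s : Xk → X) (hs : @Continuous _ _ tk tX s)
    (hsμ : ∀ x, s (μ x) = x) : K X tX := by
  obtain ⟨hK, hμ, hfac⟩ := hR
  obtain ⟨g, _, hgu⟩ := hfac Xk tk hK μ hμ
  have e1 : μ ∘ s = g := hgu (μ ∘ s) ⟨hμ.comp hs, funext fun x => congrArg μ (hsμ x)⟩
  have e2 : id = g := hgu id ⟨continuous_id, rfl⟩
  have hμs : ∀ y, μ (s y) = y := fun y => (congrFun (e1.trans e2.symm) y)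
  exact hHomeo Xk X tk tX hK ⟨⟨⟨s, μ, hμs, hsμ⟩, hs, hμ⟩⟩

variable (K : SpaceClass) (hT0 : AllT0 K) (hHomeo : ClosedUnderHomeo K)
  (hRefl : IsReflective K)

include hT0 hHomeo hRefl

/-- A reflective subcategory containing a non-T₁ space contains the Sierpiński space. -/
lemma K_sierpinski (hNotT1 : NotSubT1 K) : K Prop inferInstance := by
  obtain ⟨A, tA, hKA, hnT1⟩ := hNotT1
  letI := tA
  haveI : T0Space A := hT0 A tA hKA
  rw [t1Space_iff_exists_open] at hnT1
  simp only [Pairwise, not_forall] at hnT1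
  obtain ⟨x, y, hxy, hU⟩ := hnT1
  push_neg at hU
  have hUP : ∀ U : Set A, IsOpen U → x ∈ U → y ∈ U := fun U h1 h2 => hU U h1 h2
  have hynx : y ∉ closure ({x} : Set A) := by
    intro hy
    refine hxy (Inseparable.eq ?_)
    rw [inseparable_iff_forall_isOpen]
    intro s hs
    refine ⟨fun hx => hUP s hs hx, fun hys => ?_⟩
    rcases mem_closure_iff.mp hy s hs hys with ⟨c, hcs, hc⟩
    rwa [← hc]
  classical
  set i : Prop → A := fun p => if p then y else x with hi
  have hic : Continuous i := by
    rw [continuous_def]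
    intro U hUo
    by_cases hx : x ∈ U
    · have : i ⁻¹' U = univ := by
        ext p; simp only [hi, mem_preimage, mem_univ, iff_true]
        by_cases hp : p
        · rw [if_pos hp]; exact hUP U hUo hx
        · rw [if_neg hp]; exact hx
      rw [this]; exact isOpen_univ
    · by_cases hy : y ∈ U
      · have : i ⁻¹' U = {p | p} := by
          ext p; simp only [hi, mem_preimage, mem_setOf_eq]
          by_cases hp : p
          · rw [if_pos hp]; exact iff_of_true hy hp
          · rw [if_neg hp]; exact iff_of_false hx hp
        rw [this]
        exact continuous_Prop.mp continuous_id
      · have : i ⁻¹' U = ∅ := by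
          ext p; simp only [hi, mem_preimage, mem_empty_iff_false, iff_false]
          by_cases hp : p
          · rw [if_pos hp]; exact hy
          · rw [if_neg hp]; exact hx
        rw [this]; exact isOpen_empty
  set r : A → Prop := fun z => z ∉ closure ({x} : Set A) with hr
  have hrc : Continuous r := by
    refine continuous_Prop.mpr ?_
    show IsOpen {z : A | z ∉ closure {x}}
    exact isClosed_closure.isOpen_compl
  have hri : ∀ p, r (i p) = p := by
    intro p
    by_cases hp : p
    · simp only [hi, hr, if_pos hp]
      exact propext (iff_of_true hynx hp)
    · simp only [hi, hr, if_neg hp]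
      exact propext (iff_of_false (not_not_intro (subset_closure rfl)) hp)
  obtain ⟨Pk, tk, μ, hRP⟩ := hRefl Prop inferInstance inferInstance
  obtain ⟨h, ⟨hhc, hhμ⟩, -⟩ := hRP.2.2 A tA hKA i hic
  refine K_of_section K hHomeo hRP (r ∘ h) (hrc.comp hhc) fun p => ?_
  show r (h (μ p)) = p
  rw [show h (μ p) = i p from congrFun hhμ p]
  exact hri p

/-- Reflective subcategories of `Top₀` are productive. -/
lemma K_productive : Productive K := by
  intro I Xi ti hK
  letI : ∀ i, TopologicalSpace (Xi i) := ti
  haveI : ∀ i, T0Space (Xi i) := fun i => hT0 _ _ (hK i)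
  haveI : T0Space (∀ i, Xi i) := Pi.instT0Space
  obtain ⟨Pk, tk, μ, hRP⟩ := hRefl (∀ i, Xi i) _ inferInstance
  have hfac := hRP.2.2
  have hg : ∀ i, ∃ g : Pk → Xi i, @Continuous _ _ tk (ti i) g ∧ g ∘ μ = fun p => p i :=
    fun i => by
      obtain ⟨g, hg, -⟩ := hfac (Xi i) (ti i) (hK i) (fun p => p i) (continuous_apply i)
      exact ⟨g, hg⟩
  choose g hgc hgμ using hg
  refine K_of_section K hHomeo hRP (fun q j => g j q) (continuous_pi fun j => hgc j)
    fun p => funext fun j => ?_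
  exact congrFun (hgμ j) p

/-- Reflective subcategories of `Top₀` have equalizers. -/
lemma K_hasEqualizers : HasEqualizers K := by
  intro X Y tX tY hX hY f g hf hg
  letI := tX; letI := tY
  haveI : T0Space X := hT0 _ _ hX
  haveI : T0Space Y := hT0 _ _ hY
  haveI hE0 : T0Space {x | f x = g x} := Subtype.t0Space
  obtain ⟨Ek, tk, μ, hRE⟩ := hRefl {x | f x = g x} (subTop tX {x | f x = g x}) hE0
  obtain ⟨h, ⟨hhc, hhμ⟩, -⟩ := hRE.2.2 X tX hX Subtype.val continuous_subtype_val
  obtain ⟨u, ⟨huc, huμ⟩, huu⟩ := hRE.2.2 Y tY hY (fun e => f e.1)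
    (hf.comp continuous_subtype_val)
  have e1 : f ∘ h = u := huu (f ∘ h) ⟨hf.comp hhc, by
    rw [Function.comp_assoc, hhμ]; rfl⟩
  have e2 : g ∘ h = u := huu (g ∘ h) ⟨hg.comp hhc, by
    rw [Function.comp_assoc, hhμ]; funext e; exact (e.2).symm⟩
  have hmem : ∀ q, f (h q) = g (h q) := fun q => congrFun (e1.trans e2.symm) q
  refine K_of_section K hHomeo hRE (fun q => ⟨h q, hmem q⟩) (hhc.subtype_mk _)
    fun e => Subtype.ext ?_
  exact congrFun hhμ e

/-- A reflective subcategory of `Top₀` containing a non-T₁ space contains all sober spaces. -/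
lemma K_sober (hNotT1 : NotSubT1 K) :
    ∀ (X : Type) (tX : TopologicalSpace X), Sober X tX → K X tX := by
  have hS := K_sierpinski K hT0 hHomeo hRefl hNotT1
  have hProd := K_productive K hT0 hHomeo hRefl
  have hEq := K_hasEqualizers K hT0 hHomeo hRefl
  intro X tX hsob
  letI := tX
  haveI : T0Space X := hsob.1
  haveI : QuasiSober X := hsob.2
  classical
  set O := {U : Set X // IsOpen U} with hO
  set P := O → Prop with hP
  set J := Sum (O × O) (Sum (Set O) Unit) with hJ
  have hKP : K P Pi.topologicalSpace := hProd O (fun _ => Prop) (fun _ => inferInstance)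
    (fun _ => hS)
  have hKJ : K (J → Prop) Pi.topologicalSpace := hProd J (fun _ => Prop)
    (fun _ => inferInstance) (fun _ => hS)
  set Φ : P → J → Prop := fun F j =>
    match j with
    | .inl (U, V) => F ⟨U.1 ∩ V.1, U.2.inter V.2⟩
    | .inr (.inl 𝒱) => F ⟨⋃ U ∈ 𝒱, U.1, isOpen_biUnion fun U _ => U.2⟩
    | .inr (.inr _) => F ⟨univ, isOpen_univ⟩
    with hΦ
  set Ψ : P → J → Prop := fun F j =>
    match j with
    | .inl (U, V) => F U ∧ F V
    | .inr (.inl 𝒱) => ∃ U ∈ 𝒱, F U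
    | .inr (.inr _) => True
    with hΨ
  have hΦc : Continuous Φ := by
    refine continuous_pi fun j => ?_
    rcases j with ⟨U, V⟩ | 𝒱 | u
    · exact continuous_apply _
    · exact continuous_apply _
    · exact continuous_apply _
  have hΨc : Continuous Ψ := by
    refine continuous_pi fun j => ?_
    rcases j with ⟨U, V⟩ | 𝒱 | u
    · refine continuous_Prop.mpr ?_
      have : {F : P | F U ∧ F V} = {F : P | F U} ∩ {F : P | F V} := rfl
      rw [this]
      exact (continuous_Prop.mp (continuous_apply U)).inter
        (continuous_Prop.mp (continuous_apply V))
    · refine continuous_Prop.mpr ?_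
      have : {F : P | ∃ U ∈ 𝒱, F U} = ⋃ U ∈ 𝒱, {F : P | F U} := by
        ext F; simp only [mem_setOf_eq, mem_iUnion, exists_prop]
      rw [this]
      exact isOpen_biUnion fun U _ => continuous_Prop.mp (continuous_apply U)
    · exact continuous_const
  set E := {F : P | Φ F = Ψ F} with hE
  have hKE : K E (subTop Pi.topologicalSpace E) :=
    hEq P (J → Prop) _ _ hKP hKJ Φ Ψ hΦc hΨc
  -- the canonical map into the Sierpiński power
  set e : X → P := fun x U => x ∈ U.1 with he
  have hmem : ∀ x, e x ∈ E := by
    intro x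
    funext j
    rcases j with ⟨U, V⟩ | 𝒱 | u
    · show (x ∈ U.1 ∩ V.1) = ((x ∈ U.1) ∧ (x ∈ V.1))
      exact propext (Set.mem_inter_iff x U.1 V.1)
    · show (x ∈ ⋃ U ∈ 𝒱, U.1) = ∃ U ∈ 𝒱, x ∈ U.1
      refine propext ?_
      rw [mem_iUnion₂]
      simp only [exists_prop]
    · show (x ∈ (univ : Set X)) = True
      exact propext (iff_of_true trivial trivial)
  set e' : X → E := fun x => ⟨e x, hmem x⟩ with he'
  have hinj : Function.Injective e' := by
    intro x y h
    have hexy : e x = e y := congrArg Subtype.val h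
    refine Inseparable.eq ?_
    rw [inseparable_iff_forall_isOpen]
    intro s hs
    exact iff_of_eq (congrFun hexy ⟨s, hs⟩)
  have hsurj : Function.Surjective e' := by
    rintro ⟨F, hF⟩
    have hand : ∀ U V : O, F ⟨U.1 ∩ V.1, U.2.inter V.2⟩ = (F U ∧ F V) :=
      fun U V => congrFun hF (.inl (U, V))
    have hsup : ∀ 𝒱 : Set O, F ⟨⋃ U ∈ 𝒱, U.1, isOpen_biUnion fun U _ => U.2⟩
        = ∃ U ∈ 𝒱, F U := fun 𝒱 => congrFun hF (.inr (.inl 𝒱))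
    have huniv : F ⟨univ, isOpen_univ⟩ = True := congrFun hF (.inr (.inr ()))
    have hirr : ∀ (U V : O), U.1 = V.1 → F U = F V :=
      fun U V h => congrArg F (Subtype.ext h)
    have hmono : ∀ U V : O, U.1 ⊆ V.1 → F U → F V := by
      intro U V hUV hFU
      have h1 := hand U V
      rw [hirr ⟨U.1 ∩ V.1, U.2.inter V.2⟩ U (Set.inter_eq_left.mpr hUV)] at h1
      exact (h1 ▸ hFU).2
    set 𝒱₀ : Set O := {U | ¬ F U} with h𝒱₀
    set D : Set X := ⋃ U ∈ 𝒱₀, U.1 with hDdef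
    have hDopen : IsOpen D := isOpen_biUnion fun U _ => U.2
    have hnFD : ¬ F ⟨D, hDopen⟩ := by
      rw [hirr ⟨D, hDopen⟩ ⟨⋃ U ∈ 𝒱₀, U.1, isOpen_biUnion fun U _ => U.2⟩ rfl, hsup 𝒱₀]
      rintro ⟨U, hU, hFU⟩
      exact hU hFU
    set C := Dᶜ with hC
    have hkey : ∀ U : O, F U ↔ (U.1 ∩ C).Nonempty := by
      intro U
      constructor
      · intro hFU
        by_contra hne
        rw [Set.not_nonempty_iff_eq_empty] at hne
        have hsub : U.1 ⊆ D := by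
          intro x hx
          by_contra hxD
          exact (Set.eq_empty_iff_forall_notMem.mp hne x) ⟨hx, hxD⟩
        exact hnFD (hmono U ⟨D, hDopen⟩ hsub hFU)
      · rintro ⟨x, hxU, hxC⟩
        by_contra hFU
        exact hxC (Set.mem_biUnion (show U ∈ 𝒱₀ from hFU) hxU)
    have hCne : C.Nonempty := by
      have : F ⟨univ, isOpen_univ⟩ := huniv ▸ trivial
      obtain ⟨x, -, hx⟩ := (hkey ⟨univ, isOpen_univ⟩).mp this
      exact ⟨x, hx⟩
    have hCcl : IsClosed C := hDopen.isClosed_compl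
    have hCirr : IsIrreducible C := by
      refine ⟨hCne, fun u v hu hv h1 h2 => ?_⟩
      have hFu : F ⟨u, hu⟩ := (hkey ⟨u, hu⟩).mpr (by
        obtain ⟨x, hxC, hxu⟩ := h1; exact ⟨x, hxu, hxC⟩)
      have hFv : F ⟨v, hv⟩ := (hkey ⟨v, hv⟩).mpr (by
        obtain ⟨x, hxC, hxv⟩ := h2; exact ⟨x, hxv, hxC⟩)
      have hFuv : F ⟨u ∩ v, hu.inter hv⟩ := (hand ⟨u, hu⟩ ⟨v, hv⟩) ▸ ⟨hFu, hFv⟩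
      obtain ⟨x, hxuv, hxC⟩ := (hkey ⟨u ∩ v, hu.inter hv⟩).mp hFuv
      exact ⟨x, hxC, hxuv⟩
    obtain ⟨z, hz⟩ := QuasiSober.sober hCirr hCcl
    refine ⟨z, Subtype.ext (funext fun U => propext ?_)⟩
    show z ∈ U.1 ↔ F U
    constructor
    · intro hzU
      refine (hkey U).mpr ⟨z, hzU, ?_⟩
      rw [← hz]; exact subset_closure rfl
    · intro hFU
      obtain ⟨x, hxU, hxC⟩ := (hkey U).mp hFU
      rw [← hz] at hxC
      obtain ⟨y, hy1, hy2⟩ := (closure_inter_open_nonempty_iff U.2).mp ⟨x, hxC, hxU⟩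
      rwa [← hy1]
  have hec : Continuous e' := by
    refine Continuous.subtype_mk ?_ _
    refine continuous_pi fun U => ?_
    refine continuous_Prop.mpr ?_
    show IsOpen {x : X | x ∈ U.1}
    exact U.2
  have hopen : IsOpenMap e' := by
    intro U hU
    have himg : e' '' U = Subtype.val ⁻¹' {F : P | F ⟨U, hU⟩} := by
      ext q
      constructor
      · rintro ⟨x, hxU, rfl⟩
        exact hxU
      · intro hq
        obtain ⟨x, hx⟩ := hsurj q
        refine ⟨x, ?_, hx⟩
        have hxv : e x = q.1 := congrArg Subtype.val hx
        have h2 : (x ∈ U) = (q.1 ⟨U, hU⟩) := congrFun hxv ⟨U, hU⟩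
        exact cast h2.symm hq
    rw [himg]
    exact (continuous_Prop.mp (continuous_apply (⟨U, hU⟩ : O))).preimage
      continuous_subtype_val
  have homeo : @Homeomorph X E tX _ :=
    Equiv.toHomeomorphOfContinuousOpen (Equiv.ofBijective e' ⟨hinj, hsurj⟩) hec hopen
  exact hHomeo E X (subTop Pi.topologicalSpace E) tX hKE ⟨homeo.symm⟩

/-- Forward (K3): intersections of K-subspaces of sober spaces. -/
lemma K_inter (hNotT1 : NotSubT1 K) :
    ∀ (Z : Type) (tZ : TopologicalSpace Z), Sober Z tZ →
      ∀ (I : Type) (Xi : I → Set Z), (∀ i, K (Xi i) (subTop tZ (Xi i))) →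
        K (⋂ i, Xi i) (subTop tZ (⋂ i, Xi i)) := by
  intro Z tZ hZs I Xi hKXi
  letI := tZ
  haveI : T0Space Z := hZs.1
  have hKZ : K Z tZ := K_sober K hT0 hHomeo hRefl hNotT1 Z tZ hZs
  haveI hA0 : T0Space (⋂ i, Xi i) := Subtype.t0Space
  obtain ⟨Ak, tk, μ, hRA⟩ := hRefl (⋂ i, Xi i) (subTop tZ (⋂ i, Xi i)) hA0
  obtain ⟨h, ⟨hhc, hhμ⟩, hhu⟩ := hRA.2.2 Z tZ hKZ Subtype.val continuous_subtype_val
  have hval : ∀ i q, h q ∈ Xi i := by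
    intro i
    obtain ⟨g, ⟨hgc, hgμ⟩, -⟩ := hRA.2.2 (Xi i) (subTop tZ (Xi i)) (hKXi i)
      (fun a => ⟨a.1, mem_iInter.mp a.2 i⟩)
      (continuous_subtype_val.subtype_mk _)
    have heq : (fun q => (g q).1) = h := hhu _ ⟨continuous_subtype_val.comp hgc,
      funext fun a => congrArg Subtype.val (congrFun hgμ a)⟩
    exact fun q => heq ▸ (g q).2
  refine K_of_section K hHomeo hRA (fun q => ⟨h q, mem_iInter.mpr fun i => hval i q⟩)
    (hhc.subtype_mk _) fun a => Subtype.ext ?_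
  exact congrFun hhμ a

/-- Forward (K4): preimages of K-subspaces under maps of sober spaces. -/
lemma K_preimage (hNotT1 : NotSubT1 K) :
    ∀ (X Y : Type) (tX : TopologicalSpace X) (tY : TopologicalSpace Y),
      Sober X tX → Sober Y tY →
      ∀ f : X → Y, @Continuous X Y tX tY f →
        ∀ Y₁ : Set Y, K Y₁ (subTop tY Y₁) → K (f ⁻¹' Y₁) (subTop tX (f ⁻¹' Y₁)) := by
  intro X Y tX tY hXs hYs f hf Y₁ hKY₁
  letI := tX; letI := tY
  haveI : T0Space X := hXs.1
  have hKX : K X tX := K_sober K hT0 hHomeo hRefl hNotT1 X tX hXs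
  have hKY : K Y tY := K_sober K hT0 hHomeo hRefl hNotT1 Y tY hYs
  haveI hP0 : T0Space (f ⁻¹' Y₁) := Subtype.t0Space
  obtain ⟨Pk, tk, μ, hRP⟩ := hRefl (f ⁻¹' Y₁) (subTop tX (f ⁻¹' Y₁)) hP0
  obtain ⟨h, ⟨hhc, hhμ⟩, -⟩ := hRP.2.2 X tX hKX Subtype.val continuous_subtype_val
  obtain ⟨g, ⟨hgc, hgμ⟩, -⟩ := hRP.2.2 Y₁ (subTop tY Y₁) hKY₁
    (fun p => ⟨f p.1, p.2⟩) ((hf.comp continuous_subtype_val).subtype_mk _)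
  obtain ⟨u, -, huu⟩ := hRP.2.2 Y tY hKY (fun p => f p.1)
    (hf.comp continuous_subtype_val)
  have e1 : (fun q => f (h q)) = u := huu _ ⟨hf.comp hhc,
    funext fun p => congrArg f (congrFun hhμ p)⟩
  have e2 : (fun q => (g q).1) = u := huu _ ⟨continuous_subtype_val.comp hgc,
    funext fun p => congrArg Subtype.val (congrFun hgμ p)⟩
  have hmem : ∀ q, h q ∈ f ⁻¹' Y₁ := by
    intro q
    show f (h q) ∈ Y₁
    have : f (h q) = (g q).1 := by rw [congrFun e1 q, congrFun e2 q]
    rw [this]; exact (g q).2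
  refine K_of_section K hHomeo hRP (fun q => ⟨h q, hmem q⟩) (hhc.subtype_mk _)
    fun p => Subtype.ext ?_
  exact congrFun hhμ p

end Forward


section Backward
open TopologicalSpace Set

lemma K_reflective_of_KL (K : SpaceClass) (hT0 : AllT0 K) (hHomeo : ClosedUnderHomeo K)
    (hK1 : ∀ (X : Type) (tX : TopologicalSpace X), Sober X tX → K X tX)
    (hK3 : ∀ (Z : Type) (tZ : TopologicalSpace Z), Sober Z tZ →
        ∀ (I : Type) (Xi : I → Set Z), (∀ i, K (Xi i) (subTop tZ (Xi i))) →
          K (⋂ i, Xi i) (subTop tZ (⋂ i, Xi i)))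
    (hK4 : ∀ (X Y : Type) (tX : TopologicalSpace X) (tY : TopologicalSpace Y),
        Sober X tX → Sober Y tY →
        ∀ f : X → Y, @Continuous X Y tX tY f →
          ∀ Y₁ : Set Y, K Y₁ (subTop tY Y₁) → K (f ⁻¹' Y₁) (subTop tX (f ⁻¹' Y₁))) :
    IsReflective K := by
  intro X tX hX0
  letI := tX
  haveI : T0Space X := hX0
  have hsobX : Sober (SobPt X) sobTop := ⟨sobPt_t0, sobPt_quasiSober⟩
  set 𝒜 : Set (Set (SobPt X)) :=
    {A | range (etaSob (X := X)) ⊆ A ∧ K A (subTop sobTop A)} with h𝒜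
  set Xk : Set (SobPt X) := ⋂ A : 𝒜, A.1 with hXk
  have hKXk : K Xk (subTop sobTop Xk) :=
    hK3 (SobPt X) sobTop hsobX 𝒜 (fun A => A.1) (fun A => A.2.2)
  have hmemXk : ∀ x, etaSob x ∈ Xk :=
    fun x => mem_iInter.mpr fun A => A.2.1 (mem_range_self x)
  set μ : X → Xk := fun x => ⟨etaSob x, hmemXk x⟩ with hμ
  have hμc : @Continuous X Xk tX (subTop sobTop Xk) μ := continuous_etaSob.subtype_mk _
  -- the b-closure of the image of `X` contains `Xk`
  set B0 : Set (SobPt X) := @closure _ (bTop (SobPt X) sobTop) (range etaSob) with hB0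
  have hB0A : B0 ∈ 𝒜 := ⟨@subset_closure _ (bTop _ sobTop) (range etaSob),
    hK1 B0 (subTop sobTop B0) (sober_of_bClosed sobTop hsobX B0
      (@isClosed_closure _ (bTop _ sobTop) (range etaSob)))⟩
  refine ⟨Xk, subTop sobTop Xk, μ, hKXk, hμc, ?_⟩
  intro Z tZ hKZ f hf
  letI := tZ
  haveI : T0Space Z := hT0 Z tZ hKZ
  have hsobZ : Sober (SobPt Z) sobTop := ⟨sobPt_t0, sobPt_quasiSober⟩
  have hKrange : K (range (etaSob (X := Z))) (subTop sobTop (range etaSob)) :=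
    hHomeo Z _ tZ _ hKZ ⟨etaHomeo⟩
  set B : Set (SobPt X) := sobMap f hf ⁻¹' (range etaSob) with hBdef
  have hKB : K B (subTop sobTop B) := hK4 (SobPt X) (SobPt Z) sobTop sobTop hsobX hsobZ
    (sobMap f hf) (continuous_sobMap f hf) (range etaSob) hKrange
  have hBA : B ∈ 𝒜 := by
    refine ⟨?_, hKB⟩
    rintro p ⟨x, rfl⟩
    show sobMap f hf (etaSob x) ∈ range etaSob
    rw [sobMap_eta]
    exact mem_range_self _
  have hmapsto : ∀ c : Xk, sobMap f hf c.1 ∈ range (etaSob (X := Z)) :=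
    fun c => mem_iInter.mp c.2 ⟨B, hBA⟩
  set g : Xk → Z := fun c => (etaHomeo (X := Z)).symm ⟨sobMap f hf c.1, hmapsto c⟩ with hg
  have hgc : @Continuous Xk Z (subTop sobTop Xk) tZ g :=
    (etaHomeo (X := Z)).symm.continuous.comp
      (((continuous_sobMap f hf).comp continuous_subtype_val).subtype_mk _)
  have hgμ : g ∘ μ = f := by
    funext x
    show (etaHomeo (X := Z)).symm ⟨sobMap f hf (etaSob x), hmapsto (μ x)⟩ = f x
    have h1 : (⟨sobMap f hf (etaSob x), hmapsto (μ x)⟩ : range (etaSob (X := Z)))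
        = etaHomeo (f x) := by
      refine Subtype.ext ?_
      show sobMap f hf (etaSob x) = (etaHomeo (f x) : SobPt Z)
      rw [sobMap_eta]
      rfl
    rw [h1, Homeomorph.symm_apply_apply]
  have key : ∀ (g1 g2 : Xk → Z), @Continuous Xk Z (subTop sobTop Xk) tZ g1 →
      @Continuous Xk Z (subTop sobTop Xk) tZ g2 → g1 ∘ μ = f → g2 ∘ μ = f →
      ∀ (c : Xk) (s : Set Z), IsOpen s → g1 c ∈ s → g2 c ∈ s := by
    intro g1 g2 hg1c hg2c hg1μ hg2μ c s hs hc1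
    obtain ⟨W, hW, hWeq⟩ := isOpen_induced_iff.mp (hs.preimage hg1c)
    have hcW : c.1 ∈ W := by
      have : c ∈ Subtype.val ⁻¹' W := by rw [hWeq]; exact hc1
      exact this
    have hcB0 : c.1 ∈ B0 := mem_iInter.mp c.2 ⟨B0, hB0A⟩
    have hbasic : @IsOpen _ (bTop (SobPt X) sobTop) (W ∩ closure {c.1}) :=
      isOpen_generateFrom_of_mem ⟨W, c.1, hW, hcW, rfl⟩
    obtain ⟨p, ⟨hpW, hpcl⟩, x, hx⟩ :=
      (@mem_closure_iff _ (bTop _ sobTop) c.1 (range etaSob)).mp hcB0 _ hbasic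
        ⟨hcW, subset_closure rfl⟩
    subst hx
    have h1 : f x ∈ s := by
      have h2 : μ x ∈ Subtype.val ⁻¹' W := hpW
      rw [hWeq] at h2
      have h3 : g1 (μ x) ∈ s := h2
      rwa [show g1 (μ x) = f x from congrFun hg1μ x] at h3
    have h2 : μ x ∈ @closure Xk (subTop sobTop Xk) {c} := by
      refine closure_subtype.mpr ?_
      simpa using hpcl
    have h3 : f x ∈ closure {g2 c} := by
      have h4 := image_closure_subset_closure_image (f := g2) (s := ({c} : Set Xk)) hg2c
        ⟨μ x, h2, rfl⟩
      simp only [image_singleton] at h4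
      rwa [show g2 (μ x) = f x from congrFun hg2μ x] at h4
    obtain ⟨y, hys, hyc⟩ := mem_closure_iff.mp h3 s hs h1
    exact hyc ▸ hys
  refine ⟨g, ⟨hgc, hgμ⟩, ?_⟩
  rintro g' ⟨hg'c, hg'μ⟩
  funext c
  refine Inseparable.eq ?_
  rw [inseparable_iff_forall_isOpen]
  intro s hs
  exact ⟨key g' g hg'c hgc hg'μ hgμ c s hs, key g g' hgc hg'c hgμ hg'μ c s hs⟩

end Backward

/-- a full subcategory `K` of Top₀ closed under homeomorphisms containing a
non-T₁ space is reflective iff it satisfies the Keimel–Lawson conditions (K1), (K3), (K4). -/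
theorem statement15 (K : SpaceClass) (hT0 : AllT0 K) (hHomeo : ClosedUnderHomeo K)
    (hNotT1 : NotSubT1 K) :
    IsReflective K ↔
      ((∀ (X : Type) (tX : TopologicalSpace X), Sober X tX → K X tX) ∧
       (∀ (Z : Type) (tZ : TopologicalSpace Z), Sober Z tZ →
          ∀ (I : Type) (Xi : I → Set Z), (∀ i, K (Xi i) (subTop tZ (Xi i))) →
            K (⋂ i, Xi i) (subTop tZ (⋂ i, Xi i))) ∧
       (∀ (X Y : Type) (tX : TopologicalSpace X) (tY : TopologicalSpace Y),
          Sober X tX → Sober Y tY →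
          ∀ f : X → Y, @Continuous X Y tX tY f →
            ∀ Y₁ : Set Y, K Y₁ (subTop tY Y₁) → K (f ⁻¹' Y₁) (subTop tX (f ⁻¹' Y₁)))) := by
  constructor
  · intro hRefl
    exact ⟨K_sober K hT0 hHomeo hRefl hNotT1,
      K_inter K hT0 hHomeo hRefl hNotT1,
      K_preimage K hT0 hHomeo hRefl hNotT1⟩
  · rintro ⟨hK1, hK3, hK4⟩
    exact K_reflective_of_KL K hT0 hHomeo hK1 hK3 hK4
end

section
/- The category SD of all strong d-spaces (a full subcategory of Top₀) is not reflective in Top₀, i.e., the inclusion functor SD → Top₀ has no left adjoint. -/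
open TopologicalSpace

/-- A T₀ space is a strong d-space if for every point `x`, every (nonempty) directed set `D` in
the specialization order and every open `U`, `⋂_{d ∈ D} ↑d ∩ ↑x ⊆ U` implies
`↑d₀ ∩ ↑x ⊆ U` for some `d₀ ∈ D`. -/
def StrongD (X : Type) (t : TopologicalSpace X) : Prop :=
  ∀ (x : X) (D : Set X) (U : Set X), D.Nonempty → DirectedOn (specLE t) D →
    @IsOpen X t U →
    (⋂ d ∈ D, {y | specLE t d y}) ∩ {y | specLE t x y} ⊆ U →
    ∃ d₀ ∈ D, {y | specLE t d₀ y} ∩ {y | specLE t x y} ⊆ U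

/-- The full subcategory of strong d-spaces. -/
def StrongDClass : SpaceClass := fun X t => @T0Space X t ∧ StrongD X t

set_option linter.unnecessarySeqFocus false

namespace Statement17Aux

inductive XP : Type where
  | a : ℕ → XP
  | j : ℕ → XP
  | xx : XP
  | w : XP
  | z : XP

open XP

/-- The intended specialization order on `XP`. -/
def R : XP → XP → Prop
  | a n, a m => n ≤ m
  | a n, j m => n ≤ m
  | a _, xx => False
  | a _, w => True
  | a _, z => True
  | j n, j m => n = m
  | j _, a _ => False
  | j _, xx => False
  | j _, w => False
  | j _, z => False
  | xx, a _ => False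
  | xx, j _ => True
  | xx, xx => True
  | xx, w => False
  | xx, z => True
  | w, a _ => False
  | w, j _ => False
  | w, xx => False
  | w, w => True
  | w, z => True
  | z, a _ => False
  | z, j _ => False
  | z, xx => False
  | z, w => False
  | z, z => True

lemma Rrefl (p : XP) : R p p := by cases p <;> simp [R]

lemma Rtrans {p q r : XP} (h1 : R p q) (h2 : R q r) : R p r := by
  cases p <;> cases q <;> cases r <;> simp_all [R] <;> omega

lemma Rantisymm {p q : XP} (h1 : R p q) (h2 : R q p) : p = q := by
  cases p <;> cases q <;> simp_all [R] <;> omega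

/-- The open-set predicate for our topology on `XP`. -/
def PX (O : Set XP) : Prop :=
  (∀ n, a n ∈ O → ∀ p, R (a n) p → p ∈ O) ∧
  (xx ∈ O → ∀ p, R xx p → p ∈ O) ∧
  (w ∈ O → ∃ m, ∀ p, R (a m) p → p ∈ O) ∧
  (z ∈ O → ∃ m, ∀ k, m ≤ k → j k ∈ O)

def tX : TopologicalSpace XP where
  IsOpen := PX
  isOpen_univ := by
    refine ⟨fun _ _ p _ => trivial, fun _ p _ => trivial, fun _ => ⟨0, fun p _ => trivial⟩,
      fun _ => ⟨0, fun k _ => trivial⟩⟩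
  isOpen_inter := by
    rintro O₁ O₂ ⟨h1a, h1x, h1w, h1z⟩ ⟨h2a, h2x, h2w, h2z⟩
    refine ⟨fun n hn p hp => ⟨h1a n hn.1 p hp, h2a n hn.2 p hp⟩,
      fun hx p hp => ⟨h1x hx.1 p hp, h2x hx.2 p hp⟩, ?_, ?_⟩
    · rintro ⟨hw1, hw2⟩
      obtain ⟨m₁, hm₁⟩ := h1w hw1
      obtain ⟨m₂, hm₂⟩ := h2w hw2
      refine ⟨max m₁ m₂, fun p hp => ⟨hm₁ p (Rtrans (p := a m₁) (q := a (max m₁ m₂)) (by simp [R]) hp),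
        hm₂ p (Rtrans (p := a m₂) (q := a (max m₁ m₂)) (by simp [R]) hp)⟩⟩
    · rintro ⟨hz1, hz2⟩
      obtain ⟨m₁, hm₁⟩ := h1z hz1
      obtain ⟨m₂, hm₂⟩ := h2z hz2
      exact ⟨max m₁ m₂, fun k hk => ⟨hm₁ k (le_trans (le_max_left _ _) hk),
        hm₂ k (le_trans (le_max_right _ _) hk)⟩⟩
  isOpen_sUnion := by
    intro S hS
    refine ⟨?_, ?_, ?_, ?_⟩
    · rintro n ⟨O, hO, hn⟩ p hp
      exact ⟨O, hO, (hS O hO).1 n hn p hp⟩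
    · rintro ⟨O, hO, hx⟩ p hp
      exact ⟨O, hO, (hS O hO).2.1 hx p hp⟩
    · rintro ⟨O, hO, hw⟩
      obtain ⟨m, hm⟩ := (hS O hO).2.2.1 hw
      exact ⟨m, fun p hp => ⟨O, hO, hm p hp⟩⟩
    · rintro ⟨O, hO, hz⟩
      obtain ⟨m, hm⟩ := (hS O hO).2.2.2 hz
      exact ⟨m, fun k hk => ⟨O, hO, hm k hk⟩⟩

lemma up_closed {O : Set XP} (hO : PX O) {p q : XP} (hp : p ∈ O) (h : R p q) : q ∈ O := by
  cases p with
  | a n => exact hO.1 n hp q h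
  | xx => exact hO.2.1 hp q h
  | w =>
      cases q <;> simp [R] at h
      · exact hp
      · obtain ⟨m, hm⟩ := hO.2.2.1 hp
        exact hm z (by simp [R])
  | z => cases q <;> simp [R] at h; exact hp
  | j n => cases q <;> simp [R] at h; subst h; exact hp

lemma upA_isOpen (n : ℕ) : PX {p | R (a n) p} := by
  refine ⟨?_, ?_, ?_, ?_⟩
  · intro m hm p hp
    simp only [Set.mem_setOf_eq] at *
    exact Rtrans hm hp
  · intro hx; simp only [Set.mem_setOf_eq, R] at hx
  · intro _; exact ⟨n, fun p hp => hp⟩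
  · intro _; exact ⟨n, fun k hk => by simpa [Set.mem_setOf_eq, R] using hk⟩

lemma upXX_isOpen : PX {p | R xx p} := by
  refine ⟨?_, ?_, ?_, ?_⟩
  · intro m hm; simp [R] at hm
  · intro _ p hp; exact hp
  · intro hw; simp [R] at hw
  · intro _; exact ⟨0, fun k _ => by simp [R]⟩

lemma singJ_isOpen (k : ℕ) : PX {p | p = j k} := by
  refine ⟨?_, ?_, ?_, ?_⟩ <;> intro h <;> simp_all

/-- `V m = {z} ∪ {j k : k ≥ m}` -/
def V (m : ℕ) : Set XP := {p | p = z ∨ ∃ k, m ≤ k ∧ p = j k}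

lemma V_isOpen (m : ℕ) : PX (V m) := by
  refine ⟨?_, ?_, ?_, ?_⟩
  · rintro n (h | ⟨k, _, h⟩) <;> simp at h
  · rintro (h | ⟨k, _, h⟩) <;> simp at h
  · rintro (h | ⟨k, _, h⟩) <;> simp at h
  · intro _; exact ⟨m, fun k hk => Or.inr ⟨k, hk, rfl⟩⟩

lemma specLE_iff (p q : XP) : specLE tX p q ↔ R p q := by
  letI := tX
  rw [specLE, mem_closure_iff]
  constructor
  · intro h
    by_contra hR
    have sep : ∀ (O : Set XP), PX O → p ∈ O → q ∉ O → False := by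
      intro O hO hp hq
      obtain ⟨y, hy1, hy2⟩ := h O hO hp
      simp at hy2; subst hy2; exact hq hy1
    cases p with
    | a n =>
        refine sep {p | R (a n) p} (upA_isOpen n) ?_ ?_
        · show R (a n) (a n); exact Rrefl _
        · show ¬ R (a n) q; exact hR
    | xx =>
        refine sep {p | R xx p} upXX_isOpen ?_ ?_
        · show R xx xx; exact Rrefl _
        · show ¬ R xx q; exact hR
    | j n =>
        refine sep {p | p = j n} (singJ_isOpen n) rfl ?_
        show ¬ q = j n
        cases q <;> simp_all [R]
        omega
    | w =>
        cases q with
        | a k =>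
            exact sep {p | R (a (k+1)) p} (upA_isOpen (k+1))
              (show R (a (k+1)) w by simp [R]) (show ¬ R (a (k+1)) (a k) by simp [R])
        | j k =>
            exact sep {p | R (a (k+1)) p} (upA_isOpen (k+1))
              (show R (a (k+1)) w by simp [R]) (show ¬ R (a (k+1)) (j k) by simp [R])
        | xx =>
            exact sep {p | R (a 0) p} (upA_isOpen 0)
              (show R (a 0) w by simp [R]) (show ¬ R (a 0) xx by simp [R])
        | w => exact hR (by simp [R])
        | z => exact hR (by simp [R])
    | z =>
        cases q with
        | a k => exact sep (V 0) (V_isOpen 0) (Or.inl rfl) (by simp [V])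
        | j k =>
            exact sep (V (k+1)) (V_isOpen (k+1)) (Or.inl rfl)
              (show ¬ (j k = z ∨ ∃ i, k+1 ≤ i ∧ j k = j i) by simp)
        | xx => exact sep (V 0) (V_isOpen 0) (Or.inl rfl) (by simp [V])
        | w => exact sep (V 0) (V_isOpen 0) (Or.inl rfl) (by simp [V])
        | z => exact hR (by simp [R])
  · intro h O hO hp
    exact ⟨q, up_closed hO hp h, rfl⟩

lemma T0X : @T0Space XP tX := by
  letI := tX
  refine ⟨fun {p q} h => ?_⟩
  have h1 : specLE tX p q := specializes_iff_mem_closure.mp h.specializes'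
  have h2 : specLE tX q p := specializes_iff_mem_closure.mp h.specializes
  exact Rantisymm ((specLE_iff p q).mp h1) ((specLE_iff q p).mp h2)

/-- membership of the conclusion set, in terms of R -/
lemma max_case {D U : Set XP} {x : XP} (M : XP) (hM : M ∈ D) (hmax : ∀ d ∈ D, R d M)
    (hsub : (⋂ d ∈ D, {y | specLE tX d y}) ∩ {y | specLE tX x y} ⊆ U) :
    ∃ d₀ ∈ D, {y | specLE tX d₀ y} ∩ {y | specLE tX x y} ⊆ U := by
  refine ⟨M, hM, ?_⟩
  rintro y ⟨h1, h2⟩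
  apply hsub
  refine ⟨?_, h2⟩
  simp only [Set.mem_iInter, Set.mem_setOf_eq]
  intro d hd
  simp only [Set.mem_setOf_eq] at h1
  rw [specLE_iff] at h1 ⊢
  exact Rtrans (hmax d hd) h1

lemma SDX : StrongD XP tX := by
  classical
  intro x D U hne hdir hUopen hsub
  by_cases hz : z ∈ D
  · refine max_case z hz (fun d hd => ?_) hsub
    obtain ⟨u, hu, h1, h2⟩ := hdir d hd z hz
    rw [specLE_iff] at h1 h2
    have : u = z := by cases u <;> simp_all [R]
    subst this; exact h1
  by_cases hj : ∃ m, j m ∈ D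
  · obtain ⟨m, hm⟩ := hj
    refine max_case (j m) hm (fun d hd => ?_) hsub
    obtain ⟨u, hu, h1, h2⟩ := hdir d hd (j m) hm
    rw [specLE_iff] at h1 h2
    have : u = j m := by cases u <;> simp_all [R]
    subst this; exact h1
  by_cases hw : w ∈ D
  · refine max_case w hw (fun d hd => ?_) hsub
    obtain ⟨u, hu, h1, h2⟩ := hdir d hd w hw
    rw [specLE_iff] at h1 h2
    have : u = w := by
      cases u <;> simp_all [R]
    subst this; exact h1
  by_cases hx : xx ∈ D
  · refine max_case xx hx (fun d hd => ?_) hsub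
    obtain ⟨u, hu, h1, h2⟩ := hdir d hd xx hx
    rw [specLE_iff] at h1 h2
    have : u = xx := by
      cases u <;> simp_all [R]
    subst this; exact h1
  -- all elements of D are of the form a n
  have hall : ∀ d ∈ D, ∃ n, d = a n := by
    intro d hd
    cases d with
    | a n => exact ⟨n, rfl⟩
    | j n => exact absurd hd (by intro h; exact hj ⟨n, h⟩)
    | xx => exact absurd hd hx
    | w => exact absurd hd hw
    | z => exact absurd hd hz
  by_cases hub : ∀ N, ∃ k, N ≤ k ∧ a k ∈ D
  · -- unbounded chain case
    -- helper: w and z are in every ⋂ d ∈ D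
    have hwIn : ∀ d ∈ D, specLE tX d w := by
      intro d hd; obtain ⟨n, rfl⟩ := hall d hd
      rw [specLE_iff]; simp [R]
    have hzIn : ∀ d ∈ D, specLE tX d z := by
      intro d hd; obtain ⟨n, rfl⟩ := hall d hd
      rw [specLE_iff]; simp [R]
    cases x with
    | a n =>
        have hwU : w ∈ U := hsub ⟨by simpa using hwIn, by rw [Set.mem_setOf_eq, specLE_iff]; simp [R]⟩
        obtain ⟨m, hmO⟩ := hUopen.2.2.1 hwU
        obtain ⟨k, hk, hak⟩ := hub m
        refine ⟨a k, hak, ?_⟩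
        rintro y ⟨h1, _⟩
        rw [Set.mem_setOf_eq, specLE_iff] at h1
        exact hmO y (Rtrans (p := a m) (q := a k) (by simp [R, hk]) h1)
    | w =>
        have hwU : w ∈ U := hsub ⟨by simpa using hwIn, by rw [Set.mem_setOf_eq, specLE_iff]; simp [R]⟩
        obtain ⟨m, hmO⟩ := hUopen.2.2.1 hwU
        obtain ⟨k, hk, hak⟩ := hub m
        refine ⟨a k, hak, ?_⟩
        rintro y ⟨h1, _⟩
        rw [Set.mem_setOf_eq, specLE_iff] at h1
        exact hmO y (Rtrans (p := a m) (q := a k) (by simp [R, hk]) h1)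
    | xx =>
        have hzU : z ∈ U := hsub ⟨by simpa using hzIn, by rw [Set.mem_setOf_eq, specLE_iff]; simp [R]⟩
        obtain ⟨m, hmO⟩ := hUopen.2.2.2 hzU
        obtain ⟨k, hk, hak⟩ := hub m
        refine ⟨a k, hak, ?_⟩
        rintro y ⟨h1, h2⟩
        rw [Set.mem_setOf_eq, specLE_iff] at h1 h2
        cases y <;> simp [R] at h1 h2
        · exact hmO _ (by omega)
        · exact hzU
    | z =>
        have hzU : z ∈ U := hsub ⟨by simpa using hzIn, by rw [Set.mem_setOf_eq, specLE_iff]; simp [R]⟩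
        obtain ⟨k, hk, hak⟩ := hub 0
        refine ⟨a k, hak, ?_⟩
        rintro y ⟨h1, h2⟩
        rw [Set.mem_setOf_eq, specLE_iff] at h1 h2
        cases y <;> simp [R] at h1 h2
        exact hzU
    | j n =>
        obtain ⟨k, hk, hak⟩ := hub (n+1)
        refine ⟨a k, hak, ?_⟩
        rintro y ⟨h1, h2⟩
        rw [Set.mem_setOf_eq, specLE_iff] at h1 h2
        cases y <;> simp [R] at h1 h2
        omega
  · -- bounded: D has a maximum
    push_neg at hub
    obtain ⟨N, hN⟩ := hub
    obtain ⟨d, hd⟩ := hne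
    obtain ⟨n0, rfl⟩ := hall d hd
    have hidx : ∀ k, a k ∈ D → k ≤ N := by
      intro k hk
      by_contra hgt
      exact (hN k (by omega)) hk
    set M := Nat.findGreatest (fun n => a n ∈ D) N with hM
    have hMD : a M ∈ D := Nat.findGreatest_spec (P := fun n => a n ∈ D) (hidx n0 hd) hd
    refine max_case (a M) hMD (fun d' hd' => ?_) hsub
    obtain ⟨k, rfl⟩ := hall d' hd'
    have : k ≤ M := Nat.le_findGreatest (P := fun n => a n ∈ D) (hidx k hd') hd'
    simpa [R] using this

/- ------------- Sierpinski space ------------- -/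

def tS : TopologicalSpace Bool where
  IsOpen O := false ∈ O → true ∈ O
  isOpen_univ := fun _ => trivial
  isOpen_inter := fun O₁ O₂ h1 h2 hf => ⟨h1 hf.1, h2 hf.2⟩
  isOpen_sUnion := by
    rintro S hS ⟨O, hO, hf⟩
    exact ⟨O, hO, hS O hO hf⟩

lemma specLE_S_true (b : Bool) : specLE tS b true := by
  letI := tS
  rw [specLE, mem_closure_iff]
  intro O hO hb
  refine ⟨true, ?_, rfl⟩
  cases b
  · exact hO hb
  · exact hb

lemma specLE_S_of_true {y : Bool} (h : specLE tS true y) : y = true := by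
  letI := tS
  cases y
  · rw [specLE, mem_closure_iff] at h
    obtain ⟨u, hu, hmem⟩ := h {true} (by intro hf; simp at hf) rfl
    simp at hmem; subst hmem; simp at hu
  · rfl

lemma T0S : @T0Space Bool tS := by
  letI := tS
  refine ⟨fun {p q} h => ?_⟩
  have h1 : specLE tS p q := specializes_iff_mem_closure.mp h.specializes'
  have h2 : specLE tS q p := specializes_iff_mem_closure.mp h.specializes
  cases p <;> cases q
  · rfl
  · exact (specLE_S_of_true h2).symm ▸ rfl
  · exact specLE_S_of_true h1 ▸ rfl
  · rfl

lemma SDS : StrongD Bool tS := by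
  intro x D U hne hdir hUopen hsub
  by_cases ht : true ∈ D
  · refine ⟨true, ht, ?_⟩
    rintro y ⟨h1, h2⟩
    rw [Set.mem_setOf_eq] at h1
    have hy : y = true := specLE_S_of_true h1
    subst hy
    apply hsub
    refine ⟨?_, h2⟩
    simp only [Set.mem_iInter, Set.mem_setOf_eq]
    intro d _
    exact specLE_S_true d
  · obtain ⟨d, hd⟩ := hne
    have hdf : d = false := by cases d; rfl; exact absurd hd ht
    subst hdf
    refine ⟨false, hd, ?_⟩
    rintro y ⟨h1, h2⟩
    apply hsub
    refine ⟨?_, h2⟩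
    simp only [Set.mem_iInter, Set.mem_setOf_eq]
    intro d' hd'
    have : d' = false := by cases d'; rfl; exact absurd hd' ht
    subst this
    exact h1


/-- composition of continuous maps w.r.t. explicit topologies -/
lemma contComp {α β γ : Type} {tα : TopologicalSpace α} {tβ : TopologicalSpace β}
    {tγ : TopologicalSpace γ} {g : β → γ} {f : α → β}
    (hg : @Continuous β γ tβ tγ g) (hf : @Continuous α β tα tβ f) :
    @Continuous α γ tα tγ (g ∘ f) := by
  letI := tα; letI := tβ; letI := tγ
  exact hg.comp hf

/- ------------- the equalizer maps ------------- -/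

def fB : XP → Bool
  | XP.z => true
  | XP.j _ => true
  | _ => false

def gB : XP → Bool
  | XP.j _ => true
  | _ => false

lemma fB_cont : @Continuous XP Bool tX tS fB := by
  rw [continuous_def]
  intro O hO
  -- hO : false ∈ O → true ∈ O
  have hboth : false ∈ O → ∀ b : Bool, b ∈ O := by
    intro hf b; cases b; exact hf; exact hO hf
  refine ⟨?_, ?_, ?_, ?_⟩
  · intro n hn p _
    exact hboth hn (fB p)
  · intro hxx p _
    exact hboth hxx (fB p)
  · intro hw
    exact ⟨0, fun p _ => hboth hw (fB p)⟩
  · intro hz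
    exact ⟨0, fun k _ => hz⟩

lemma gB_cont : @Continuous XP Bool tX tS gB := by
  rw [continuous_def]
  intro O hO
  have hboth : false ∈ O → ∀ b : Bool, b ∈ O := by
    intro hf b; cases b; exact hf; exact hO hf
  refine ⟨?_, ?_, ?_, ?_⟩
  · intro n hn p _
    exact hboth hn (gB p)
  · intro hxx p _
    exact hboth hxx (gB p)
  · intro hw
    exact ⟨0, fun p _ => hboth hw (gB p)⟩
  · intro hz
    exact ⟨0, fun k _ => hboth hz (gB (j k))⟩

/- ------------- the equalizer subspace ------------- -/

abbrev EP : Type := {p : XP // fB p = gB p}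

def tE : TopologicalSpace EP := @instTopologicalSpaceSubtype XP (fun p => fB p = gB p) tX

lemma EP_ne_z (e : EP) : e.val ≠ z := by
  intro h
  have := e.property
  rw [h] at this
  simp [fB, gB] at this

lemma EP_mem (p : XP) (h : p ≠ z) : fB p = gB p := by
  cases p <;> simp_all [fB, gB]

lemma specLE_E_iff (u v : EP) : specLE tE u v ↔ R u.val v.val := by
  letI := tX
  have h1 : specLE tE u v ↔ u.val ∈ closure (Subtype.val '' ({v} : Set EP)) := by
    rw [specLE]
    exact @closure_subtype XP _ (fun p => fB p = gB p) u {v}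
  rw [h1, Set.image_singleton]
  exact specLE_iff u.val v.val

lemma notSD_E : ¬ StrongD EP tE := by
  intro h
  have hx0 : fB xx = gB xx := by simp [fB, gB]
  have haprop : ∀ n : ℕ, fB (a n) = gB (a n) := fun n => by simp [fB, gB]
  have hjprop : ∀ n : ℕ, fB (j n) = gB (j n) := fun n => by simp [fB, gB]
  set D : Set EP := Set.range (fun n : ℕ => (⟨a n, haprop n⟩ : EP)) with hD
  have hdir : DirectedOn (specLE tE) D := by
    rintro _ ⟨n, rfl⟩ _ ⟨m, rfl⟩
    refine ⟨⟨a (max n m), haprop _⟩, ⟨max n m, rfl⟩, ?_, ?_⟩ <;>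
      rw [specLE_E_iff] <;> simp [R]
  have hop : @IsOpen EP tE ∅ := @isOpen_empty EP tE
  have hsub : (⋂ d ∈ D, {y | specLE tE d y}) ∩ {y | specLE tE (⟨xx, hx0⟩ : EP) y} ⊆ ∅ := by
    rintro y ⟨h1, h2⟩
    simp only [Set.mem_iInter, Set.mem_setOf_eq] at h1 h2
    rw [specLE_E_iff] at h2
    have h1' : ∀ n : ℕ, R (a n) y.val := by
      intro n
      have := h1 ⟨a n, haprop n⟩ ⟨n, rfl⟩
      rwa [specLE_E_iff] at this
    exfalso
    have hyz := EP_ne_z y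
    have h2' : R xx y.val := h2
    rcases hy : y.val with n | n | _ | _ | _
    · rw [hy] at h2'; simp only [R] at h2'
    · have := h1' (n+1); rw [hy] at this; simp only [R] at this; omega
    · have := h1' 0; rw [hy] at this; simp only [R] at this
    · rw [hy] at h2'; simp only [R] at h2'
    · exact hyz hy
  obtain ⟨d₀, hd₀, hcon⟩ := h ⟨xx, hx0⟩ D ∅ ⟨⟨a 0, haprop 0⟩, ⟨0, rfl⟩⟩ hdir hop hsub
  -- the conclusion is absurd
  obtain ⟨k, hk⟩ := hd₀
  have : (⟨j k, hjprop k⟩ : EP) ∈ ({y | specLE tE d₀ y} ∩ {y | specLE tE ⟨xx, hx0⟩ y}) := by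
    refine ⟨?_, ?_⟩
    · show specLE tE d₀ ⟨j k, hjprop k⟩
      rw [specLE_E_iff, ← hk]
      simp [R]
    · show specLE tE ⟨xx, hx0⟩ ⟨j k, hjprop k⟩
      rw [specLE_E_iff]
      simp [R]
  exact hcon this

/- ------------- transport of StrongD along a homeomorphism ------------- -/

lemma specLE_map {α β : Type} {tα : TopologicalSpace α} {tβ : TopologicalSpace β} {φ : α → β}
    (hφ : @Continuous α β tα tβ φ) {p q : α} (h : specLE tα p q) :
    specLE tβ (φ p) (φ q) := by
  letI := tα; letI := tβ
  rw [specLE] at h ⊢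
  have h1 : φ p ∈ φ '' closure {q} := ⟨p, h, rfl⟩
  have h2 := image_closure_subset_closure_image hφ h1
  rwa [Set.image_singleton] at h2

lemma strongD_transfer {α β : Type} (tα : TopologicalSpace α) (tβ : TopologicalSpace β)
    (φ : α → β) (ψ : β → α) (hφ : @Continuous α β tα tβ φ) (hψ : @Continuous β α tβ tα ψ)
    (h1 : ∀ y, ψ (φ y) = y) (h2 : ∀ y, φ (ψ y) = y) (hβ : StrongD β tβ) : StrongD α tα := by
  intro x D U hne hdir hU hsub
  have hUopen' : @IsOpen β tβ (φ '' U) := by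
    have himg : φ '' U = ψ ⁻¹' U := by
      rw [Set.image_eq_preimage_of_inverse h1 h2]
    rw [himg]
    exact hψ.isOpen_preimage U hU
  have hdir' : DirectedOn (specLE tβ) (φ '' D) := by
    rintro _ ⟨d1, hd1, rfl⟩ _ ⟨d2, hd2, rfl⟩
    obtain ⟨c, hc, hc1, hc2⟩ := hdir d1 hd1 d2 hd2
    exact ⟨φ c, ⟨c, hc, rfl⟩, specLE_map hφ hc1, specLE_map hφ hc2⟩
  have hsub' : (⋂ d ∈ (φ '' D), {y | specLE tβ d y}) ∩ {y | specLE tβ (φ x) y} ⊆ φ '' U := by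
    rintro y' ⟨hy1, hy2⟩
    simp only [Set.mem_iInter, Set.mem_setOf_eq] at hy1 hy2
    have hyU : ψ y' ∈ U := by
      apply hsub
      refine ⟨?_, ?_⟩
      · simp only [Set.mem_iInter, Set.mem_setOf_eq]
        intro d hd
        have := hy1 (φ d) ⟨d, hd, rfl⟩
        have := specLE_map hψ this
        rwa [h1 d] at this
      · have := specLE_map hψ hy2
        rwa [h1 x] at this
    exact ⟨ψ y', hyU, h2 y'⟩
  obtain ⟨d₀', hd₀', hcon⟩ := hβ (φ x) (φ '' D) (φ '' U) (hne.image φ) hdir' hUopen' hsub'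
  obtain ⟨d₀, hd₀D, rfl⟩ := hd₀'
  refine ⟨d₀, hd₀D, ?_⟩
  rintro y ⟨hy1, hy2⟩
  simp only [Set.mem_setOf_eq] at hy1 hy2
  have : φ y ∈ φ '' U := hcon ⟨specLE_map hφ hy1, specLE_map hφ hy2⟩
  obtain ⟨u, huU, hu⟩ := this
  have : u = y := by
    have := congrArg ψ hu
    rwa [h1 u, h1 y] at this
  rwa [← this]

end Statement17Aux

open Statement17Aux

/-- the category of strong d-spaces is not reflective in Top₀. -/
theorem statement17 : ¬ IsReflective StrongDClass := by
  intro hrefl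
  classical
  letI instX := tX
  letI instE : TopologicalSpace EP := tE
  haveI instT0X := T0X
  have hT0E : @T0Space EP tE :=
    (Subtype.t0Space : T0Space {p : XP // fB p = gB p})
  obtain ⟨Ek, tk, ν, hK, hν, hfact⟩ := hrefl EP tE hT0E
  obtain ⟨hT0k, hSDk⟩ := hK
  letI instk := tk
  have hval : @Continuous EP XP tE tX Subtype.val := continuous_subtype_val
  have hXP : StrongDClass XP tX := ⟨T0X, SDX⟩
  obtain ⟨h, ⟨hc, hcomm⟩, _⟩ := hfact XP tX hXP Subtype.val hval
  -- fB ∘ h = gB ∘ h by uniqueness of factorization of fB ∘ val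
  obtain ⟨u, _, huniq⟩ := hfact Bool tS ⟨T0S, SDS⟩ (fB ∘ Subtype.val) (contComp fB_cont hval)
  have e1 : fB ∘ h = u := by
    apply huniq
    refine ⟨contComp fB_cont hc, ?_⟩
    rw [Function.comp_assoc, hcomm]
  have e2 : gB ∘ h = u := by
    apply huniq
    refine ⟨contComp gB_cont hc, ?_⟩
    rw [Function.comp_assoc, hcomm]
    funext e
    exact (e.property).symm
  have hfg : ∀ yk, fB (h yk) = gB (h yk) := by
    intro yk
    have := e1.trans e2.symm
    exact congrFun this yk
  let h' : Ek → EP := fun yk => ⟨h yk, hfg yk⟩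
  have hc' : @Continuous Ek EP tk tE h' := Continuous.subtype_mk hc hfg
  have hid1 : ∀ e : EP, h' (ν e) = e := by
    intro e
    apply Subtype.ext
    exact congrFun hcomm e
  -- ν ∘ h' = id by uniqueness of factorization of ν through itself
  obtain ⟨u2, _, huniq2⟩ := hfact Ek tk ⟨hT0k, hSDk⟩ ν hν
  have e3 : (id : Ek → Ek) = u2 := by
    apply huniq2
    exact ⟨continuous_id, rfl⟩
  have e4 : ν ∘ h' = u2 := by
    apply huniq2
    refine ⟨contComp hν hc', ?_⟩
    rw [Function.comp_assoc]
    have : h' ∘ ν = id := funext hid1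
    rw [this, Function.comp_id]
  have hid2 : ∀ y : Ek, ν (h' y) = y := by
    intro y
    have := e4.trans e3.symm
    exact congrFun this y
  have hSD_E : StrongD EP tE :=
    strongD_transfer tE tk ν h' hν hc' hid1 hid2 hSDk
  exact notSD_E hSD_E
end

section
/- The category KSob of all k-bounded sober spaces (a full subcategory of Top₀) is not reflective in Top₀, i.e., the inclusion functor KSob → Top₀ has no left adjoint. -/
open TopologicalSpace

/-- A T₀ space is k-bounded sober if every irreducible closed set having a supremum in the
specialization order is the closure of a unique point. -/
def KBoundedSober (X : Type) (t : TopologicalSpace X) : Prop :=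
  ∀ F : Set X, @IsClosed X t F → @IsIrreducible X t F →
    (∃ s : X, (∀ a ∈ F, specLE t a s) ∧ ∀ b : X, (∀ a ∈ F, specLE t a b) → specLE t s b) →
    ∃! x : X, F = @closure X t {x}

/-- The full subcategory of k-bounded sober spaces. -/
def KSobClass : SpaceClass := fun X t => @T0Space X t ∧ KBoundedSober X t

section Auxiliary

/-! ### The upper-set (Alexandrov) topology of a preorder -/

/-- The Alexandrov topology whose open sets are the upper sets of a preorder. -/
def upperTop (α : Type) [Preorder α] : TopologicalSpace α where
  IsOpen U := ∀ ⦃x y : α⦄, x ≤ y → x ∈ U → y ∈ U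
  isOpen_univ := fun _ _ _ _ => trivial
  isOpen_inter := fun _ _ hU hV _ _ hxy hx => ⟨hU hxy hx.1, hV hxy hx.2⟩
  isOpen_sUnion := fun _ hS _ _ hxy hx => by
    obtain ⟨U, hUS, hxU⟩ := hx; exact ⟨U, hUS, hS U hUS hxy hxU⟩

variable {α : Type} [Preorder α]

lemma upperTop_isOpen {U : Set α} :
    @IsOpen α (upperTop α) U ↔ ∀ ⦃x y : α⦄, x ≤ y → x ∈ U → y ∈ U := Iff.rfl

lemma upperTop_isClosed {C : Set α} :
    @IsClosed α (upperTop α) C ↔ ∀ ⦃x y : α⦄, x ≤ y → y ∈ C → x ∈ C := by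
  letI := upperTop α
  constructor
  · intro h x y hxy hy
    by_contra hx
    exact (upperTop_isOpen.1 h.isOpen_compl hxy hx) hy
  · intro h
    exact ⟨upperTop_isOpen.2 fun x y hxy hx hy => hx (h hxy hy)⟩

lemma upperTop_closure (S : Set α) :
    @closure α (upperTop α) S = {x | ∃ s ∈ S, x ≤ s} := by
  letI := upperTop α
  apply Set.Subset.antisymm
  · refine closure_minimal (fun s hs => ⟨s, hs, le_refl s⟩) ?_
    exact upperTop_isClosed.2 fun x y hxy hy => by
      obtain ⟨s, hs, hys⟩ := hy; exact ⟨s, hs, hxy.trans hys⟩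
  · rintro x ⟨s, hs, hxs⟩
    exact upperTop_isClosed.1 isClosed_closure hxs (subset_closure hs)

lemma specLE_upperTop {x y : α} : specLE (upperTop α) x y ↔ x ≤ y := by
  unfold specLE
  rw [upperTop_closure]
  simp

lemma upperTop_t0 {β : Type} [PartialOrder β] : @T0Space β (upperTop β) := by
  letI := upperTop β
  refine ⟨fun x y h => ?_⟩
  have hc := inseparable_iff_closure_eq.1 h
  rw [upperTop_closure, upperTop_closure] at hc
  have h1 : x ∈ {z | ∃ s ∈ ({y} : Set β), z ≤ s} := by
    rw [← hc]; exact ⟨x, rfl, le_refl x⟩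
  have h2 : y ∈ {z | ∃ s ∈ ({x} : Set β), z ≤ s} := by
    rw [hc]; exact ⟨y, rfl, le_refl y⟩
  obtain ⟨s, hs, hxs⟩ := h1
  obtain ⟨t, ht, hyt⟩ := h2
  cases hs; cases ht
  exact le_antisymm hxs hyt

lemma upperTop_continuous_of_monotone {β : Type} [Preorder β] {f : α → β} (hf : Monotone f) :
    @Continuous α β (upperTop α) (upperTop β) f := by
  letI := upperTop α; letI := upperTop β
  rw [continuous_def]
  intro U hU
  exact upperTop_isOpen.2 fun x y hxy hx => upperTop_isOpen.1 hU (hf hxy) hx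

/-- The subspace topology of an upper-set topology is the upper-set topology of the
induced order. -/
lemma subTop_upperTop (A : Set α) : subTop (upperTop α) A = upperTop A := by
  apply TopologicalSpace.ext_iff.2
  intro U
  constructor
  · rintro ⟨V, hV, rfl⟩
    exact upperTop_isOpen.2 fun x y hxy hx => hV hxy hx
  · intro hU
    refine ⟨{x | ∃ u : A, u ∈ U ∧ (u : α) ≤ x}, ?_, ?_⟩
    · intro x y hxy hx
      obtain ⟨u, huU, hux⟩ := hx
      exact ⟨u, huU, hux.trans hxy⟩
    · ext a
      constructor
      · rintro ⟨u, huU, hua⟩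
        exact upperTop_isOpen.1 hU (show u ≤ a from hua) huU
      · intro ha
        exact ⟨a, ha, le_refl _⟩

/-- If in a partial order every nonempty lower set possessing a supremum contains that
supremum, then the upper topology is k-bounded sober. -/
lemma kbs_upperTop {β : Type} [PartialOrder β]
    (h : ∀ F : Set β, (∀ ⦃x y : β⦄, x ≤ y → y ∈ F → x ∈ F) → F.Nonempty →
      ∀ s : β, (∀ a ∈ F, a ≤ s) → (∀ b : β, (∀ a ∈ F, a ≤ b) → s ≤ b) → s ∈ F) :
    KBoundedSober β (upperTop β) := by
  rintro F hFc hFirr ⟨s, hub, hlub⟩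
  have hlow := upperTop_isClosed.1 hFc
  have hub' : ∀ a ∈ F, a ≤ s := fun a ha => specLE_upperTop.1 (hub a ha)
  have hlub' : ∀ b : β, (∀ a ∈ F, a ≤ b) → s ≤ b := fun b hb =>
    specLE_upperTop.1 (hlub b fun a ha => specLE_upperTop.2 (hb a ha))
  have hsF : s ∈ F := h F hlow hFirr.1 s hub' hlub'
  have hF : F = @closure β (upperTop β) {s} := by
    rw [upperTop_closure]
    ext x
    constructor
    · intro hx; exact ⟨s, rfl, hub' x hx⟩
    · rintro ⟨t, ht, hxt⟩; cases ht; exact hlow hxt hsF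
  refine ⟨s, hF, ?_⟩
  intro y hy
  have hyF : y ∈ F := by
    rw [hy, upperTop_closure]; exact ⟨y, rfl, le_refl y⟩
  have hsy : s ∈ F := hsF
  rw [hy, upperTop_closure] at hsy
  obtain ⟨t, ht, hst⟩ := hsy
  cases ht
  exact le_antisymm (hub' y hyF) hst

/-- k-bounded sobriety transfers across a continuous retraction pair (a homeomorphism). -/
lemma kbs_transfer {X Y : Type} (tX : TopologicalSpace X) (tY : TopologicalSpace Y)
    (μ : X → Y) (r : Y → X) (hμ : @Continuous X Y tX tY μ) (hr : @Continuous Y X tY tX r)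
    (h1 : r ∘ μ = id) (h2 : μ ∘ r = id) (hY : KBoundedSober Y tY) :
    KBoundedSober X tX := by
  letI := tX; letI := tY
  have h1' : ∀ a, r (μ a) = a := fun a => congrFun h1 a
  have h2' : ∀ b, μ (r b) = b := fun b => congrFun h2 b
  let e : X ≃ₜ Y :=
    { toFun := μ, invFun := r, left_inv := h1', right_inv := h2',
      continuous_toFun := hμ, continuous_invFun := hr }
  have hcoe : ⇑e = μ := rfl
  have hcoes : ⇑e.symm = r := rfl
  rintro F hFc hFirr ⟨s, hub, hlub⟩
  have hmap : ∀ {a b : X}, specLE tX a b → specLE tY (μ a) (μ b) := by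
    intro a b hab
    exact (Specializes.map (specializes_iff_mem_closure.2 hab) hμ).mem_closure
  have hmapr : ∀ {a b : Y}, specLE tY a b → specLE tX (r a) (r b) := by
    intro a b hab
    exact (Specializes.map (specializes_iff_mem_closure.2 hab) hr).mem_closure
  have hclosed : IsClosed (μ '' F) := by rw [← hcoe]; exact e.isClosed_image.2 hFc
  have hirr : IsIrreducible (μ '' F) := hFirr.image μ hμ.continuousOn
  have hsup : ∃ t : Y, (∀ a ∈ μ '' F, specLE tY a t) ∧
      ∀ b : Y, (∀ a ∈ μ '' F, specLE tY a b) → specLE tY t b := by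
    refine ⟨μ s, ?_, ?_⟩
    · rintro a ⟨x, hxF, rfl⟩
      exact hmap (hub x hxF)
    · intro b hb
      have hrb : ∀ a ∈ F, specLE tX a (r b) := by
        intro a ha
        have := hmapr (hb (μ a) ⟨a, ha, rfl⟩)
        rwa [h1' a] at this
      have hsrb : specLE tX s (r b) := by
        have := hmapr (hmap (hlub (r b) hrb))
        rwa [h1' s, h1' (r b)] at this
      have := hmap hsrb
      rwa [h2' b] at this
  obtain ⟨y, hy, hyu⟩ := hY (μ '' F) hclosed hirr hsup
  have himg : r '' (μ '' F) = F := by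
    rw [Set.image_image]
    ext x
    simp [h1']
  refine ⟨r y, ?_, ?_⟩
  · show F = closure {r y}
    calc F = r '' (μ '' F) := himg.symm
      _ = r '' closure {y} := by rw [hy]
      _ = closure {r y} := by rw [← hcoes, e.symm.image_closure, hcoes, Set.image_singleton]
  · intro x hx
    have hx' : F = closure {x} := hx
    have hxy : μ '' F = closure {μ x} := by
      rw [hx', ← Set.image_singleton, ← hcoe, e.image_closure, hcoe, Set.image_singleton]
    have hmx := hyu (μ x) hxy
    show x = r y
    rw [← hmx, h1' x]

/-! ### The counterexample space -/

/-- The poset `a 0 < a 1 < ⋯` with two incomparable upper bounds `b`, `c`. -/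
inductive Pt : Type
  | a : ℕ → Pt
  | b : Pt
  | c : Pt

/-- The order on `Pt`. -/
def Pt.pe : Pt → Pt → Prop
  | .a m, .a n => m ≤ n
  | .a _, _ => True
  | .b, .b => True
  | .c, .c => True
  | _, _ => False

instance : PartialOrder Pt where
  le := Pt.pe
  le_refl x := by cases x <;> simp [Pt.pe]
  le_trans x y z h1 h2 := by
    cases x <;> cases y <;> cases z <;> simp_all [Pt.pe] <;> omega
  le_antisymm x y h1 h2 := by
    cases x <;> cases y <;> simp_all [Pt.pe] <;> omega

lemma Pt.le_a_iff {x : Pt} {n : ℕ} : x ≤ Pt.a n ↔ ∃ m ≤ n, x = Pt.a m := by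
  cases x with
  | a m =>
    constructor
    · intro h
      exact ⟨m, h, rfl⟩
    · rintro ⟨k, hk, he⟩
      injection he with h2
      subst h2
      exact hk
  | b =>
    constructor
    · intro h
      exact absurd h (fun h => h)
    · rintro ⟨k, hk, he⟩
      exact Pt.noConfusion he
  | c =>
    constructor
    · intro h
      exact absurd h (fun h => h)
    · rintro ⟨k, hk, he⟩
      exact Pt.noConfusion he

lemma Pt.a_le_a {m n : ℕ} : Pt.a m ≤ Pt.a n ↔ m ≤ n := Iff.rfl

lemma Pt.a_le_b {n : ℕ} : Pt.a n ≤ Pt.b := trivial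

lemma Pt.a_le_c {n : ℕ} : Pt.a n ≤ Pt.c := trivial

lemma Pt.not_b_le_c : ¬ Pt.b ≤ Pt.c := fun h => h

lemma Pt.not_c_le_b : ¬ Pt.c ≤ Pt.b := fun h => h

/-- In `Pt`, every nonempty lower set with a supremum contains its supremum. -/
lemma Pt.attained : ∀ F : Set Pt, (∀ ⦃x y : Pt⦄, x ≤ y → y ∈ F → x ∈ F) → F.Nonempty →
    ∀ s : Pt, (∀ a ∈ F, a ≤ s) → (∀ b : Pt, (∀ a ∈ F, a ≤ b) → s ≤ b) → s ∈ F := by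
  rintro F hlow ⟨x0, hx0⟩ s hub hlub
  by_contra hs
  cases s with
  | a n =>
    have hmem : ∀ x ∈ F, ∃ m, m < n ∧ x = Pt.a m := by
      intro x hx
      obtain ⟨m, hmn, rfl⟩ := Pt.le_a_iff.1 (hub x hx)
      refine ⟨m, lt_of_le_of_ne hmn fun h => hs ?_, rfl⟩
      rwa [← h]
    obtain ⟨m0, hm0, _⟩ := hmem x0 hx0
    have hn : 1 ≤ n := by omega
    have hkey : Pt.a n ≤ Pt.a (n - 1) := by
      apply hlub
      intro x hx
      obtain ⟨m, hm, rfl⟩ := hmem x hx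
      show m ≤ n - 1
      omega
    have : n ≤ n - 1 := hkey
    omega
  | b =>
    have hkey : Pt.b ≤ Pt.c := by
      apply hlub
      intro x hx
      cases x with
      | a m => exact Pt.a_le_c
      | b => exact absurd hx hs
      | c => exact absurd (hub _ hx) Pt.not_c_le_b
    exact Pt.not_b_le_c hkey
  | c =>
    have hkey : Pt.c ≤ Pt.b := by
      apply hlub
      intro x hx
      cases x with
      | a m => exact Pt.a_le_b
      | b => exact absurd (hub _ hx) Pt.not_b_le_c
      | c => exact absurd hx hs
    exact Pt.not_c_le_b hkey

/-- A Sierpiński-like two point chain. -/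
inductive Sp : Type
  | o : Sp
  | i : Sp

/-- The order on `Sp`. -/
def Sp.pe : Sp → Sp → Prop
  | .i, .o => False
  | _, _ => True

instance : PartialOrder Sp where
  le := Sp.pe
  le_refl x := by cases x <;> trivial
  le_trans x y z h1 h2 := by cases x <;> cases y <;> cases z <;> simp_all [Sp.pe]
  le_antisymm x y h1 h2 := by cases x <;> cases y <;> simp_all [Sp.pe]

lemma Sp.attained : ∀ F : Set Sp, (∀ ⦃x y : Sp⦄, x ≤ y → y ∈ F → x ∈ F) → F.Nonempty →
    ∀ s : Sp, (∀ a ∈ F, a ≤ s) → (∀ b : Sp, (∀ a ∈ F, a ≤ b) → s ≤ b) → s ∈ F := by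
  rintro F hlow ⟨x0, hx0⟩ s hub hlub
  cases s with
  | o =>
    have := hub x0 hx0
    cases x0 with
    | o => exact hx0
    | i => exact absurd this (fun h => h)
  | i =>
    by_contra hs
    have hkey : Sp.i ≤ Sp.o := by
      apply hlub
      intro x hx
      cases x with
      | o => trivial
      | i => exact absurd hx hs
    exact hkey

/-- The characteristic map of the open point `c`. -/
def chi : Pt → Sp := fun x =>
  match x with
  | .c => .i
  | _ => .o

lemma chi_monotone : Monotone chi := by
  intro x y h
  cases x <;> cases y <;> first | trivial | exact absurd h (fun h => h)

/-- The subspace missing the point `c`. -/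
def Aset : Set Pt := {x | chi x = Sp.o}

lemma a_mem_Aset (n : ℕ) : Pt.a n ∈ Aset := rfl

lemma b_mem_Aset : Pt.b ∈ Aset := rfl

/-- The subspace `Aset` is not k-bounded sober: the chain is an irreducible closed set whose
supremum `b` exists but does not belong to it. -/
lemma not_kbs_Aset : ¬ KBoundedSober Aset (upperTop Aset) := by
  intro h
  set F : Set Aset := {x | ∃ n, (x : Pt) = Pt.a n} with hFdef
  have hFc : @IsClosed Aset (upperTop Aset) F := by
    refine upperTop_isClosed.2 ?_
    rintro x y hxy ⟨n, hn⟩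
    have : (x : Pt) ≤ Pt.a n := by rw [← hn]; exact hxy
    obtain ⟨m, _, hm⟩ := Pt.le_a_iff.1 this
    exact ⟨m, hm⟩
  have hFirr : @IsIrreducible Aset (upperTop Aset) F := by
    constructor
    · exact ⟨⟨Pt.a 0, a_mem_Aset 0⟩, 0, rfl⟩
    · rintro u v hu hv ⟨x, hxF, hxu⟩ ⟨y, hyF, hyv⟩
      obtain ⟨n, hn⟩ := hxF
      obtain ⟨m, hm⟩ := hyF
      refine ⟨⟨Pt.a (max n m), a_mem_Aset _⟩, ⟨max n m, rfl⟩, ?_, ?_⟩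
      · refine upperTop_isOpen.1 hu ?_ hxu
        show (x : Pt) ≤ Pt.a (max n m)
        rw [hn]
        exact le_max_left n m
      · refine upperTop_isOpen.1 hv ?_ hyv
        show (y : Pt) ≤ Pt.a (max n m)
        rw [hm]
        exact le_max_right n m
  have hsup : ∃ s : Aset, (∀ a ∈ F, specLE (upperTop Aset) a s) ∧
      ∀ b : Aset, (∀ a ∈ F, specLE (upperTop Aset) a b) → specLE (upperTop Aset) s b := by
    refine ⟨⟨Pt.b, b_mem_Aset⟩, ?_, ?_⟩
    · rintro x ⟨n, hn⟩
      refine specLE_upperTop.2 ?_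
      show (x : Pt) ≤ Pt.b
      rw [hn]
      exact Pt.a_le_b
    · rintro ⟨bv, hbv⟩ hb
      refine specLE_upperTop.2 ?_
      cases bv with
      | a m =>
        have := specLE_upperTop.1 (hb ⟨Pt.a (m + 1), a_mem_Aset _⟩ ⟨m + 1, rfl⟩)
        have hmm : m + 1 ≤ m := this
        omega
      | b => exact le_refl _
      | c => exact absurd hbv (by intro hc; exact Sp.noConfusion hc)
  obtain ⟨x, hx, -⟩ := h F hFc hFirr hsup
  have hxF : x ∈ F := by
    rw [hx, upperTop_closure]
    exact ⟨x, rfl, le_refl x⟩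
  obtain ⟨n, hn⟩ := hxF
  have hmem : (⟨Pt.a (n + 1), a_mem_Aset _⟩ : Aset) ∈ F := ⟨n + 1, rfl⟩
  rw [hx, upperTop_closure] at hmem
  obtain ⟨t, ht, hle⟩ := hmem
  cases ht
  have : Pt.a (n + 1) ≤ (x : Pt) := hle
  rw [hn] at this
  have : n + 1 ≤ n := this
  omega

end Auxiliary

/-- the category of k-bounded sober spaces is not reflective in Top₀. -/
theorem statement18 : ¬ IsReflective KSobClass := by
  intro h
  letI : TopologicalSpace Pt := upperTop Pt
  letI : TopologicalSpace Sp := upperTop Sp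
  letI : TopologicalSpace Aset := subTop (upperTop Pt) Aset
  have hKPt : KSobClass Pt (upperTop Pt) := ⟨upperTop_t0, kbs_upperTop Pt.attained⟩
  have hKSp : KSobClass Sp (upperTop Sp) := ⟨upperTop_t0, kbs_upperTop Sp.attained⟩
  have hT0A : @T0Space Aset (subTop (upperTop Pt) Aset) := by
    rw [subTop_upperTop]
    exact upperTop_t0
  obtain ⟨Xk, tk, μ, hKk, hμc, hfact⟩ := h Aset (subTop (upperTop Pt) Aset) hT0A
  letI : TopologicalSpace Xk := tk
  have hιc : @Continuous Aset Pt (subTop (upperTop Pt) Aset) (upperTop Pt) Subtype.val :=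
    continuous_induced_dom
  obtain ⟨h₁, ⟨h₁c, h₁μ⟩, -⟩ := hfact Pt (upperTop Pt) hKPt Subtype.val hιc
  have hχc : @Continuous Pt Sp (upperTop Pt) (upperTop Sp) chi :=
    upperTop_continuous_of_monotone chi_monotone
  obtain ⟨g0, hg0, hg0u⟩ := hfact Sp (upperTop Sp) hKSp (fun _ => Sp.o) continuous_const
  have key : chi ∘ h₁ = fun _ => Sp.o := by
    have e1 : chi ∘ h₁ = g0 := by
      refine hg0u (chi ∘ h₁) ⟨hχc.comp h₁c, ?_⟩
      funext a
      show chi (h₁ (μ a)) = Sp.o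
      rw [show h₁ (μ a) = (a : Pt) from congrFun h₁μ a]
      exact a.2
    have e2 : (fun _ => Sp.o) = g0 := hg0u _ ⟨continuous_const, rfl⟩
    rw [e1, ← e2]
  let r : Xk → Aset := fun z => ⟨h₁ z, congrFun key z⟩
  have hrc : @Continuous Xk Aset tk (subTop (upperTop Pt) Aset) r :=
    Continuous.subtype_mk h₁c _
  have hrμ : r ∘ μ = id := by
    funext a
    exact Subtype.ext (congrFun h₁μ a)
  have hμr : μ ∘ r = id := by
    obtain ⟨g, hg, hgu⟩ := hfact Xk tk hKk μ hμc
    have e1 : μ ∘ r = g := by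
      refine hgu _ ⟨hμc.comp hrc, ?_⟩
      rw [Function.comp_assoc, hrμ, Function.comp_id]
    have e2 : (id : Xk → Xk) = g := hgu _ ⟨continuous_id, by funext a; rfl⟩
    rw [e1, ← e2]
  have hA : KBoundedSober Aset (subTop (upperTop Pt) Aset) :=
    kbs_transfer (subTop (upperTop Pt) Aset) tk μ r hμc hrc hrμ hμr hKk.2
  rw [subTop_upperTop] at hA
  exact not_kbs_Aset hA
end
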